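/- arXiv:1406.3325 — 7 statements merged into one kernel-verified Lean document; each statement's English description precedes it below -/
import Mathlib

section
/- Assume γ + κ = 0 with κ > 0, let δ := e^{γ−κ} ∈ (0,1) and M := ∫₀¹ exp(s·B̃) ds. Then for every t ≥ 0 and every z = (z₁, z₂)ᵀ ∈ ℝ², M⁻¹·exp(t·B̃)·z = ((z₁+z₂)/2)·u + (δᵗ·log δ/(2(δ−1)))·(z₁−z₂)·v. -/
open Matrix

private lemma exp_two_by_two (γ κ s : ℝ) :
    NormedSpace.exp (s • (!![γ, κ; κ, γ] : Matrix (Fin 2) (Fin 2) ℝ)) =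
      !![(Real.exp (s*(γ+κ)) + Real.exp (s*(γ-κ)))/2,
         (Real.exp (s*(γ+κ)) - Real.exp (s*(γ-κ)))/2;
         (Real.exp (s*(γ+κ)) - Real.exp (s*(γ-κ)))/2,
         (Real.exp (s*(γ+κ)) + Real.exp (s*(γ-κ)))/2] := by
  set Q : Matrix (Fin 2) (Fin 2) ℝ := !![1, 1; 1, -1] with hQdef
  have hQ : IsUnit Q := by
    rw [Matrix.isUnit_iff_isUnit_det]
    simp [hQdef, Matrix.det_fin_two_of]
    norm_num
  have hQinv : Q⁻¹ = (2:ℝ)⁻¹ • Q := by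
    apply Matrix.inv_eq_right_inv
    ext i j
    fin_cases i <;> fin_cases j <;>
      simp [hQdef, Matrix.mul_apply, Fin.sum_univ_two] <;> norm_num
  have key : s • (!![γ, κ; κ, γ] : Matrix (Fin 2) (Fin 2) ℝ)
      = Q * Matrix.diagonal ![s*(γ+κ), s*(γ-κ)] * Q⁻¹ := by
    rw [hQinv]
    ext i j
    fin_cases i <;> fin_cases j <;>
      simp [hQdef, Matrix.mul_apply, Matrix.vecMul, dotProduct, Fin.sum_univ_two, Matrix.diagonal_apply] <;> ring
  rw [key, Matrix.exp_conj _ _ hQ, Matrix.exp_diagonal, hQinv, Pi.exp_def]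
  ext i j
  fin_cases i <;> fin_cases j <;>
    simp [hQdef, Matrix.mul_apply, Matrix.vecMul, dotProduct, Fin.sum_univ_two, Matrix.diagonal_apply,
      ← Real.exp_eq_exp_ℝ] <;> ring

/-- In the doubly symmetric critical case `γ + κ = 0`, `κ > 0`, with
`δ = e^{γ−κ} ∈ (0,1)` and `M = ∫₀¹ exp(s·B̃) ds` (entrywise integral), for every
`t ≥ 0` and every `z = (z₁, z₂)ᵀ ∈ ℝ²`,
`M⁻¹·exp(t·B̃)·z = ((z₁+z₂)/2)·u + (δᵗ·log δ/(2(δ−1)))·(z₁−z₂)·v`,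
where `u = (1,1)ᵀ` and `v = (1,−1)ᵀ`. -/
theorem integral_exp_inv_mulVec_exp (γ κ : ℝ) (hcrit : γ + κ = 0) (hκ : 0 < κ)
    (δ : ℝ) (hδ : δ = Real.exp (γ - κ))
    (M : Matrix (Fin 2) (Fin 2) ℝ)
    (hM : ∀ i j, M i j = ∫ s in (0:ℝ)..1,
      NormedSpace.exp (s • (!![γ, κ; κ, γ] : Matrix (Fin 2) (Fin 2) ℝ)) i j)
    (t : ℝ) (ht : 0 ≤ t) (z : Fin 2 → ℝ) :
    M⁻¹ *ᵥ (NormedSpace.exp (t • (!![γ, κ; κ, γ] : Matrix (Fin 2) (Fin 2) ℝ)) *ᵥ z)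
      = ((z 0 + z 1) / 2) • (![1, 1] : Fin 2 → ℝ)
        + (δ ^ t * Real.log δ / (2 * (δ - 1)) * (z 0 - z 1)) • (![1, -1] : Fin 2 → ℝ) := by
  have hγ : γ = -κ := by linarith
  subst hγ
  set c : ℝ := -κ - κ with hc
  have hc0 : c < 0 := by simp only [hc]; linarith
  have hcne : c ≠ 0 := ne_of_lt hc0
  have hδpos : 0 < δ := hδ ▸ Real.exp_pos c
  have hδlt : δ < 1 := by rw [hδ]; exact Real.exp_lt_one_iff.mpr hc0
  have hlogδ : Real.log δ = c := by rw [hδ, Real.log_exp]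
  have hδt : δ ^ t = Real.exp (t * c) := by
    rw [Real.rpow_def_of_pos hδpos, hlogδ, mul_comm]
  -- entries of M
  have hint : (∫ s in (0:ℝ)..1, Real.exp (s * c)) = (δ - 1) / c := by
    have : (∫ s in (0:ℝ)..1, Real.exp (s * c))
        = c⁻¹ • ∫ s in (0*c:ℝ)..(1*c), Real.exp s :=
      intervalIntegral.integral_comp_mul_right Real.exp hcne
    rw [this, integral_exp, hδ]
    simp only [smul_eq_mul, zero_mul, one_mul, Real.exp_zero]
    ring
  have hint0 : (∫ s in (0:ℝ)..1, Real.exp (s * (-κ + κ))) = 1 := by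
    rw [hcrit]; simp
  set p : ℝ := (1 + (δ - 1) / c) / 2 with hp
  set q : ℝ := (1 - (δ - 1) / c) / 2 with hq
  have h1 : IntervalIntegrable (fun s : ℝ => Real.exp (s * (-κ + κ)))
      MeasureTheory.volume 0 1 :=
    (Real.continuous_exp.comp (continuous_id.mul continuous_const)).intervalIntegrable 0 1
  have h2 : IntervalIntegrable (fun s : ℝ => Real.exp (s * c))
      MeasureTheory.volume 0 1 :=
    (Real.continuous_exp.comp (continuous_id.mul continuous_const)).intervalIntegrable 0 1
  have hIp : (∫ s in (0:ℝ)..1, (Real.exp (s * (-κ + κ)) + Real.exp (s * c)) / 2) = p := by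
    rw [intervalIntegral.integral_div, intervalIntegral.integral_add h1 h2, hint, hint0, hp]
  have hIq : (∫ s in (0:ℝ)..1, (Real.exp (s * (-κ + κ)) - Real.exp (s * c)) / 2) = q := by
    rw [intervalIntegral.integral_div, intervalIntegral.integral_sub h1 h2, hint, hint0, hq]
  have hMeq : M = !![p, q; q, p] := by
    ext i j
    rw [hM i j]
    simp only [exp_two_by_two, ← hc]
    fin_cases i <;> fin_cases j <;>
      simp only [Matrix.cons_val', Matrix.cons_val_zero, Matrix.cons_val_one,
        Matrix.head_cons, Matrix.head_fin_const, Matrix.empty_val',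
        Matrix.cons_val_fin_one] <;>
      first | exact hIp | exact hIq
  -- M is invertible
  have hdet : M.det = (δ - 1) / c := by
    rw [hMeq, Matrix.det_fin_two_of, hp, hq]; ring
  have hdetne : M.det ≠ 0 := by
    rw [hdet]
    exact div_ne_zero (by linarith) hcne
  have hMunit : IsUnit M.det := isUnit_iff_ne_zero.mpr hdetne
  -- the claimed result vector
  set w : Fin 2 → ℝ := ((z 0 + z 1) / 2) • (![1, 1] : Fin 2 → ℝ)
        + (δ ^ t * Real.log δ / (2 * (δ - 1)) * (z 0 - z 1)) • (![1, -1] : Fin 2 → ℝ) with hw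
  have hkey : NormedSpace.exp (t • (!![-κ, κ; κ, -κ] : Matrix (Fin 2) (Fin 2) ℝ)) *ᵥ z
      = M *ᵥ w := by
    ext i
    fin_cases i <;>
    · simp only [exp_two_by_two, hMeq, hw, Matrix.mulVec, dotProduct,
        Fin.sum_univ_two, Pi.add_apply, Pi.smul_apply, smul_eq_mul,
        hcrit, hδt, hlogδ, hp, hq, mul_zero, Real.exp_zero, ← hc]
      simp [Fin.isValue]
      have hδ1 : δ - 1 ≠ 0 := by linarith
      have hκ' : κ ≠ 0 := ne_of_gt hκ
      field_simp
      ring_nf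
  rw [hkey, Matrix.mulVec_mulVec, Matrix.nonsing_inv_mul M hMunit, Matrix.one_mulVec]
end

section
/- Assume γ + κ = 0 with κ > 0, let δ := e^{γ−κ} ∈ (0,1) and M := ∫₀¹ exp(s·B̃) ds, and let ν be a measure on ℝ² with ∫ ‖z‖² ν(dz) < ∞. Then M⁻¹ · (∫₀¹ ∫_{ℝ²} (exp(t·B̃)z)(exp(t·B̃)z)ᵀ ν(dz) dt) · M⁻¹ = (1/4)·(∫ (z₁+z₂)² ν(dz))·[[1,1],[1,1]] + (1/2)·(∫ (z₁²−z₂²) ν(dz))·[[1,0],[0,−1]] + ((δ²−1)·log δ/(8(δ−1)²))·(∫ (z₁−z₂)² ν(dz))·[[1,−1],[−1,1]]. -/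
open Matrix MeasureTheory

lemma exp_symm_two (x y : ℝ) :
    NormedSpace.exp (!![x, y; y, x] : Matrix (Fin 2) (Fin 2) ℝ) =
      !![(Real.exp (x+y) + Real.exp (x-y))/2, (Real.exp (x+y) - Real.exp (x-y))/2;
         (Real.exp (x+y) - Real.exp (x-y))/2, (Real.exp (x+y) + Real.exp (x-y))/2] := by
  have hPinv : (!![1, 1; 1, -1] : Matrix (Fin 2) (Fin 2) ℝ)⁻¹
      = !![1/2, 1/2; 1/2, -(1/2)] := by
    apply Matrix.inv_eq_right_inv
    ext i j
    fin_cases i <;> fin_cases j <;>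
      simp [Matrix.mul_apply, Fin.sum_univ_two] <;> norm_num
  have hU : IsUnit (!![1, 1; 1, -1] : Matrix (Fin 2) (Fin 2) ℝ) := by
    rw [Matrix.isUnit_iff_isUnit_det]
    simp [Matrix.det_fin_two_of]
    norm_num
  have hA : (!![x, y; y, x] : Matrix (Fin 2) (Fin 2) ℝ)
      = !![1, 1; 1, -1] * Matrix.diagonal ![x+y, x-y] * (!![1, 1; 1, -1] : Matrix (Fin 2) (Fin 2) ℝ)⁻¹ := by
    rw [hPinv]
    ext i j
    fin_cases i <;> fin_cases j <;>
      simp [Matrix.mul_apply, Fin.sum_univ_two, Matrix.vecMul_diagonal, Matrix.diagonal_apply, Matrix.vecHead, Matrix.vecTail] <;> ring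
  rw [hA, Matrix.exp_conj _ _ hU, Matrix.exp_diagonal, hPinv]
  have he : NormedSpace.exp (![x+y, x-y]) = ![Real.exp (x+y), Real.exp (x-y)] := by
    rw [Pi.exp_def]
    ext i
    fin_cases i <;> simp [Real.exp_eq_exp_ℝ]
  rw [he]
  ext i j
  fin_cases i <;> fin_cases j <;>
    simp [Matrix.mul_apply, Fin.sum_univ_two, Matrix.vecMul_diagonal, Matrix.diagonal_apply, Matrix.vecHead, Matrix.vecTail] <;> ring

lemma int_exp_mul (l : ℝ) (hl : l ≠ 0) :
    ∫ t in (0:ℝ)..1, Real.exp (t * l) = (Real.exp l - 1) / l := by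
  have h : ∀ t ∈ Set.uIcc (0:ℝ) 1,
      HasDerivAt (fun u : ℝ => Real.exp (u * l) / l) (Real.exp (t * l)) t := by
    intro t _
    have h1 : HasDerivAt (fun u : ℝ => u * l) l t := by
      simpa using (hasDerivAt_id t).mul_const l
    have h2 := (h1.exp).div_const l
    simpa [mul_div_assoc, mul_div_cancel_right₀ _ hl] using h2
  have hint : IntervalIntegrable (fun t : ℝ => Real.exp (t * l)) volume 0 1 :=
    (Real.continuous_exp.comp (continuous_id.mul continuous_const)).intervalIntegrable 0 1
  rw [intervalIntegral.integral_eq_sub_of_hasDerivAt h hint]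
  simp [sub_div]

lemma outer_int (l A0 A1 A2 : ℝ) (hl : l ≠ 0) :
    ∫ t in (0:ℝ)..1, (A0 + A1 * Real.exp (t * l) + A2 * Real.exp (t * (2 * l)))
      = A0 + A1 * ((Real.exp l - 1) / l) + A2 * ((Real.exp (2 * l) - 1) / (2 * l)) := by
  have c1 : IntervalIntegrable (fun t : ℝ => A1 * Real.exp (t * l)) volume 0 1 :=
    (continuous_const.mul (Real.continuous_exp.comp (continuous_id.mul continuous_const))).intervalIntegrable 0 1
  have c2 : IntervalIntegrable (fun t : ℝ => A2 * Real.exp (t * (2 * l))) volume 0 1 :=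
    (continuous_const.mul (Real.continuous_exp.comp (continuous_id.mul continuous_const))).intervalIntegrable 0 1
  rw [intervalIntegral.integral_add (intervalIntegrable_const.add c1) c2,
    intervalIntegral.integral_add intervalIntegrable_const c1,
    intervalIntegral.integral_const_mul, intervalIntegral.integral_const_mul,
    int_exp_mul l hl, int_exp_mul (2 * l) (by simpa using hl)]
  simp

lemma integral_quad (ν : Measure (Fin 2 → ℝ))
    (h00 : Integrable (fun z : Fin 2 → ℝ => z 0 * z 0) ν)
    (h01 : Integrable (fun z : Fin 2 → ℝ => z 0 * z 1) ν)
    (h11 : Integrable (fun z : Fin 2 → ℝ => z 1 * z 1) ν)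
    (α β α' β' : ℝ) :
    ∫ z : Fin 2 → ℝ, (α * z 0 + β * z 1) * (α' * z 0 + β' * z 1) ∂ν
      = α * α' * (∫ z : Fin 2 → ℝ, z 0 * z 0 ∂ν)
        + (α * β' + α' * β) * (∫ z : Fin 2 → ℝ, z 0 * z 1 ∂ν)
        + β * β' * (∫ z : Fin 2 → ℝ, z 1 * z 1 ∂ν) := by
  have hfun : (fun z : Fin 2 → ℝ => (α * z 0 + β * z 1) * (α' * z 0 + β' * z 1))
      = fun z : Fin 2 → ℝ => α * α' * (z 0 * z 0)
          + ((α * β' + α' * β) * (z 0 * z 1) + β * β' * (z 1 * z 1)) := by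
    funext z; ring
  have h1 : Integrable (fun z : Fin 2 → ℝ => α * α' * (z 0 * z 0)) ν := h00.const_mul _
  have h2 : Integrable (fun z : Fin 2 → ℝ => (α * β' + α' * β) * (z 0 * z 1)) ν := h01.const_mul _
  have h3 : Integrable (fun z : Fin 2 → ℝ => β * β' * (z 1 * z 1)) ν := h11.const_mul _
  have e1 : ∫ z : Fin 2 → ℝ, (α * α' * (z 0 * z 0)
        + ((α * β' + α' * β) * (z 0 * z 1) + β * β' * (z 1 * z 1))) ∂ν
      = (∫ z : Fin 2 → ℝ, α * α' * (z 0 * z 0) ∂ν)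
        + ∫ z : Fin 2 → ℝ, ((α * β' + α' * β) * (z 0 * z 1) + β * β' * (z 1 * z 1)) ∂ν :=
    integral_add h1 (h2.add h3)
  have e2 : ∫ z : Fin 2 → ℝ, ((α * β' + α' * β) * (z 0 * z 1) + β * β' * (z 1 * z 1)) ∂ν
      = (∫ z : Fin 2 → ℝ, (α * β' + α' * β) * (z 0 * z 1) ∂ν)
        + ∫ z : Fin 2 → ℝ, β * β' * (z 1 * z 1) ∂ν :=
    integral_add h2 h3
  rw [hfun, e1, e2, integral_const_mul, integral_const_mul, integral_const_mul]
  ring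

set_option maxHeartbeats 2000000 in
/-- In the doubly symmetric critical case `γ + κ = 0`, `κ > 0`, with
`δ = e^{γ−κ} ∈ (0,1)`, `M = ∫₀¹ exp(s·B̃) ds` (entrywise integral), and a measure `ν`
on `ℝ²` with finite second moment, one has
`M⁻¹ · (∫₀¹ ∫ (exp(t·B̃)z)(exp(t·B̃)z)ᵀ ν(dz) dt) · M⁻¹
  = (1/4)·(∫ (z₁+z₂)² dν)·[[1,1],[1,1]] + (1/2)·(∫ (z₁²−z₂²) dν)·[[1,0],[0,−1]]
    + ((δ²−1)·log δ/(8(δ−1)²))·(∫ (z₁−z₂)² dν)·[[1,−1],[−1,1]]`. -/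
theorem integral_exp_inv_quadratic_form (γ κ : ℝ) (hcrit : γ + κ = 0) (hκ : 0 < κ)
    (δ : ℝ) (hδ : δ = Real.exp (γ - κ))
    (M : Matrix (Fin 2) (Fin 2) ℝ)
    (hM : ∀ i j, M i j = ∫ s in (0:ℝ)..1,
      NormedSpace.exp (s • (!![γ, κ; κ, γ] : Matrix (Fin 2) (Fin 2) ℝ)) i j)
    (ν : Measure (Fin 2 → ℝ)) (hν : Integrable (fun z : Fin 2 → ℝ => ‖z‖ ^ 2) ν)
    (W : Matrix (Fin 2) (Fin 2) ℝ)
    (hW : ∀ i j, W i j = ∫ t in (0:ℝ)..1, ∫ z : Fin 2 → ℝ,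
        (NormedSpace.exp (t • (!![γ, κ; κ, γ] : Matrix (Fin 2) (Fin 2) ℝ)) *ᵥ z) i
          * (NormedSpace.exp (t • (!![γ, κ; κ, γ] : Matrix (Fin 2) (Fin 2) ℝ)) *ᵥ z) j
        ∂ν) :
    M⁻¹ * W * M⁻¹
      = ((1 / 4 : ℝ) * ∫ z : Fin 2 → ℝ, (z 0 + z 1) ^ 2 ∂ν) •
          (!![1, 1; 1, 1] : Matrix (Fin 2) (Fin 2) ℝ)
        + ((1 / 2 : ℝ) * ∫ z : Fin 2 → ℝ, (z 0 ^ 2 - z 1 ^ 2) ∂ν) •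
          (!![1, 0; 0, -1] : Matrix (Fin 2) (Fin 2) ℝ)
        + ((δ ^ 2 - 1) * Real.log δ / (8 * (δ - 1) ^ 2) * ∫ z : Fin 2 → ℝ, (z 0 - z 1) ^ 2 ∂ν) •
          (!![1, -1; -1, 1] : Matrix (Fin 2) (Fin 2) ℝ) := by
  have hlneg : γ - κ < 0 := by linarith
  have hlne : γ - κ ≠ 0 := ne_of_lt hlneg
  have hδ1 : δ < 1 := by rw [hδ]; exact Real.exp_lt_one_iff.mpr hlneg
  have hδne1 : δ - 1 ≠ 0 := by intro h; apply absurd hδ1; simp [sub_eq_zero.mp h]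
  have hlog : Real.log δ = γ - κ := by rw [hδ, Real.log_exp]
  have hexpl : Real.exp (γ - κ) = δ := hδ.symm
  have hexp2l : Real.exp (2 * (γ - κ)) = δ ^ 2 := by
    rw [two_mul, Real.exp_add, hexpl, sq]
  -- exponential formula
  have hE : ∀ t : ℝ, NormedSpace.exp (t • (!![γ, κ; κ, γ] : Matrix (Fin 2) (Fin 2) ℝ))
      = !![(1 + Real.exp (t*(γ-κ)))/2, (1 - Real.exp (t*(γ-κ)))/2;
           (1 - Real.exp (t*(γ-κ)))/2, (1 + Real.exp (t*(γ-κ)))/2] := by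
    intro t
    have hsm : t • (!![γ, κ; κ, γ] : Matrix (Fin 2) (Fin 2) ℝ) = !![t*γ, t*κ; t*κ, t*γ] := by
      ext i j; fin_cases i <;> fin_cases j <;> simp [Matrix.smul_apply]
    rw [hsm, exp_symm_two]
    have h0 : t*γ + t*κ = 0 := by rw [← mul_add, hcrit, mul_zero]
    have h1 : t*γ - t*κ = t*(γ-κ) := by ring
    rw [h0, h1, Real.exp_zero]
  -- value of M
  obtain ⟨c, hc⟩ : ∃ c : ℝ, (δ-1)/(γ-κ) = c := ⟨_, rfl⟩
  obtain ⟨d, hd⟩ : ∃ d : ℝ, (δ^2-1)/(2*(γ-κ)) = d := ⟨_, rfl⟩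
  have hcne : c ≠ 0 := hc ▸ div_ne_zero hδne1 hlne
  have hk3 : (δ ^ 2 - 1) * Real.log δ / (8 * (δ - 1) ^ 2) = d / (4 * c^2) := by
    rw [← hc, ← hd, hlog]
    field_simp
    ring
  have hcont : IntervalIntegrable (fun t : ℝ => Real.exp (t*(γ-κ))) volume 0 1 :=
    (Real.continuous_exp.comp (continuous_id.mul continuous_const)).intervalIntegrable 0 1
  have hcint : ∫ t in (0:ℝ)..1, Real.exp (t*(γ-κ)) = c := by
    rw [int_exp_mul _ hlne, hexpl, hc]
  have hplus : ∫ t in (0:ℝ)..1, (1 + Real.exp (t*(γ-κ)))/2 = (1 + c)/2 := by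
    rw [intervalIntegral.integral_div,
      intervalIntegral.integral_add intervalIntegrable_const hcont, hcint]
    norm_num
  have hminus : ∫ t in (0:ℝ)..1, (1 - Real.exp (t*(γ-κ)))/2 = (1 - c)/2 := by
    rw [intervalIntegral.integral_div,
      intervalIntegral.integral_sub intervalIntegrable_const hcont, hcint]
    norm_num
  have hMval : M = !![(1 + c)/2, (1 - c)/2;
                      (1 - c)/2, (1 + c)/2] := by
    ext i j
    fin_cases i <;> fin_cases j <;>
      (rw [hM]; simp only [hE]; simp only [Matrix.cons_val', Matrix.cons_val_zero,
        Matrix.cons_val_one, Matrix.head_cons, Matrix.empty_val', Matrix.cons_val_fin_one,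
        Matrix.head_fin_const, Matrix.of_apply])
    · exact hplus
    · exact hminus
    · exact hminus
    · exact hplus
  -- integrability of second moments
  have hzij : ∀ i j : Fin 2, Integrable (fun z : Fin 2 → ℝ => z i * z j) ν := by
    intro i j
    refine hν.mono' (((continuous_apply i).mul (continuous_apply j)).aestronglyMeasurable) ?_
    refine Filter.Eventually.of_forall fun z => ?_
    have hi : |z i| ≤ ‖z‖ := by simpa using norm_le_pi_norm z i
    have hj : |z j| ≤ ‖z‖ := by simpa using norm_le_pi_norm z j
    have habs : ‖z i * z j‖ = |z i| * |z j| := by simp [abs_mul]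
    rw [habs, sq]
    exact mul_le_mul hi hj (abs_nonneg _) (norm_nonneg _)
  have h00 := hzij 0 0
  have h01 := hzij 0 1
  have h11 := hzij 1 1
  -- target integrals in terms of moments
  have hS : ∫ z : Fin 2 → ℝ, (z 0 + z 1) ^ 2 ∂ν
      = (∫ z : Fin 2 → ℝ, z 0 * z 0 ∂ν) + 2*(∫ z : Fin 2 → ℝ, z 0 * z 1 ∂ν)
        + ∫ z : Fin 2 → ℝ, z 1 * z 1 ∂ν := by
    have h1 : (fun z : Fin 2 → ℝ => (z 0 + z 1) ^ 2)
        = fun z : Fin 2 → ℝ => (1 * z 0 + 1 * z 1) * (1 * z 0 + 1 * z 1) := by funext z; ring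
    rw [h1, integral_quad ν h00 h01 h11]; ring
  have hT : ∫ z : Fin 2 → ℝ, (z 0 - z 1) ^ 2 ∂ν
      = (∫ z : Fin 2 → ℝ, z 0 * z 0 ∂ν) - 2*(∫ z : Fin 2 → ℝ, z 0 * z 1 ∂ν)
        + ∫ z : Fin 2 → ℝ, z 1 * z 1 ∂ν := by
    have h1 : (fun z : Fin 2 → ℝ => (z 0 - z 1) ^ 2)
        = fun z : Fin 2 → ℝ => (1 * z 0 + (-1) * z 1) * (1 * z 0 + (-1) * z 1) := by funext z; ring
    rw [h1, integral_quad ν h00 h01 h11]; ring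
  have hR : ∫ z : Fin 2 → ℝ, (z 0 ^ 2 - z 1 ^ 2) ∂ν
      = (∫ z : Fin 2 → ℝ, z 0 * z 0 ∂ν) - ∫ z : Fin 2 → ℝ, z 1 * z 1 ∂ν := by
    have h1 : (fun z : Fin 2 → ℝ => (z 0 ^ 2 - z 1 ^ 2))
        = fun z : Fin 2 → ℝ => (1 * z 0 + 1 * z 1) * (1 * z 0 + (-1) * z 1) := by funext z; ring
    rw [h1, integral_quad ν h00 h01 h11]; ring
  have hmv0 : ∀ (t : ℝ) (z : Fin 2 → ℝ), (NormedSpace.exp (t • (!![γ, κ; κ, γ] : Matrix (Fin 2) (Fin 2) ℝ)) *ᵥ z) 0 = (1 + Real.exp (t*(γ-κ)))/2 * z 0 + (1 - Real.exp (t*(γ-κ)))/2 * z 1 := by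
    intro t z
    rw [hE t]
    simp [Matrix.mulVec, dotProduct, Fin.sum_univ_two]
  have hmv1 : ∀ (t : ℝ) (z : Fin 2 → ℝ), (NormedSpace.exp (t • (!![γ, κ; κ, γ] : Matrix (Fin 2) (Fin 2) ℝ)) *ᵥ z) 1 = (1 - Real.exp (t*(γ-κ)))/2 * z 0 + (1 + Real.exp (t*(γ-κ)))/2 * z 1 := by
    intro t z
    rw [hE t]
    simp [Matrix.mulVec, dotProduct, Fin.sum_univ_two]
  have inner00 : ∀ t : ℝ, (∫ z : Fin 2 → ℝ, (NormedSpace.exp (t • (!![γ, κ; κ, γ] : Matrix (Fin 2) (Fin 2) ℝ)) *ᵥ z) 0 * (NormedSpace.exp (t • (!![γ, κ; κ, γ] : Matrix (Fin 2) (Fin 2) ℝ)) *ᵥ z) 0 ∂ν)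
      = ((∫ z : Fin 2 → ℝ, z 0 * z 0 ∂ν) + 2*(∫ z : Fin 2 → ℝ, z 0 * z 1 ∂ν) + (∫ z : Fin 2 → ℝ, z 1 * z 1 ∂ν))/4 + (((∫ z : Fin 2 → ℝ, z 0 * z 0 ∂ν) - (∫ z : Fin 2 → ℝ, z 1 * z 1 ∂ν))/2) * Real.exp (t*(γ-κ)) + (((∫ z : Fin 2 → ℝ, z 0 * z 0 ∂ν) - 2*(∫ z : Fin 2 → ℝ, z 0 * z 1 ∂ν) + (∫ z : Fin 2 → ℝ, z 1 * z 1 ∂ν))/4) * Real.exp (t*(2*(γ-κ))) := by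
    intro t
    have h1 : (fun z : Fin 2 → ℝ => (NormedSpace.exp (t • (!![γ, κ; κ, γ] : Matrix (Fin 2) (Fin 2) ℝ)) *ᵥ z) 0 * (NormedSpace.exp (t • (!![γ, κ; κ, γ] : Matrix (Fin 2) (Fin 2) ℝ)) *ᵥ z) 0)
        = fun z : Fin 2 → ℝ => ((1 + Real.exp (t*(γ-κ)))/2 * z 0 + (1 - Real.exp (t*(γ-κ)))/2 * z 1) * ((1 + Real.exp (t*(γ-κ)))/2 * z 0 + (1 - Real.exp (t*(γ-κ)))/2 * z 1) := by
      funext z; simp only [hmv0, hmv1]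
    rw [h1, integral_quad ν h00 h01 h11]
    have he2 : Real.exp (t*(2*(γ-κ))) = Real.exp (t*(γ-κ)) * Real.exp (t*(γ-κ)) := by rw [← Real.exp_add]; ring_nf
    rw [he2]; ring
  have inner01 : ∀ t : ℝ, (∫ z : Fin 2 → ℝ, (NormedSpace.exp (t • (!![γ, κ; κ, γ] : Matrix (Fin 2) (Fin 2) ℝ)) *ᵥ z) 0 * (NormedSpace.exp (t • (!![γ, κ; κ, γ] : Matrix (Fin 2) (Fin 2) ℝ)) *ᵥ z) 1 ∂ν)
      = ((∫ z : Fin 2 → ℝ, z 0 * z 0 ∂ν) + 2*(∫ z : Fin 2 → ℝ, z 0 * z 1 ∂ν) + (∫ z : Fin 2 → ℝ, z 1 * z 1 ∂ν))/4 + ((0:ℝ)) * Real.exp (t*(γ-κ)) + ((-(∫ z : Fin 2 → ℝ, z 0 * z 0 ∂ν) + 2*(∫ z : Fin 2 → ℝ, z 0 * z 1 ∂ν) - (∫ z : Fin 2 → ℝ, z 1 * z 1 ∂ν))/4) * Real.exp (t*(2*(γ-κ))) := by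
    intro t
    have h1 : (fun z : Fin 2 → ℝ => (NormedSpace.exp (t • (!![γ, κ; κ, γ] : Matrix (Fin 2) (Fin 2) ℝ)) *ᵥ z) 0 * (NormedSpace.exp (t • (!![γ, κ; κ, γ] : Matrix (Fin 2) (Fin 2) ℝ)) *ᵥ z) 1)
        = fun z : Fin 2 → ℝ => ((1 + Real.exp (t*(γ-κ)))/2 * z 0 + (1 - Real.exp (t*(γ-κ)))/2 * z 1) * ((1 - Real.exp (t*(γ-κ)))/2 * z 0 + (1 + Real.exp (t*(γ-κ)))/2 * z 1) := by
      funext z; simp only [hmv0, hmv1]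
    rw [h1, integral_quad ν h00 h01 h11]
    have he2 : Real.exp (t*(2*(γ-κ))) = Real.exp (t*(γ-κ)) * Real.exp (t*(γ-κ)) := by rw [← Real.exp_add]; ring_nf
    rw [he2]; ring
  have inner10 : ∀ t : ℝ, (∫ z : Fin 2 → ℝ, (NormedSpace.exp (t • (!![γ, κ; κ, γ] : Matrix (Fin 2) (Fin 2) ℝ)) *ᵥ z) 1 * (NormedSpace.exp (t • (!![γ, κ; κ, γ] : Matrix (Fin 2) (Fin 2) ℝ)) *ᵥ z) 0 ∂ν)
      = ((∫ z : Fin 2 → ℝ, z 0 * z 0 ∂ν) + 2*(∫ z : Fin 2 → ℝ, z 0 * z 1 ∂ν) + (∫ z : Fin 2 → ℝ, z 1 * z 1 ∂ν))/4 + ((0:ℝ)) * Real.exp (t*(γ-κ)) + ((-(∫ z : Fin 2 → ℝ, z 0 * z 0 ∂ν) + 2*(∫ z : Fin 2 → ℝ, z 0 * z 1 ∂ν) - (∫ z : Fin 2 → ℝ, z 1 * z 1 ∂ν))/4) * Real.exp (t*(2*(γ-κ))) := by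
    intro t
    have h1 : (fun z : Fin 2 → ℝ => (NormedSpace.exp (t • (!![γ, κ; κ, γ] : Matrix (Fin 2) (Fin 2) ℝ)) *ᵥ z) 1 * (NormedSpace.exp (t • (!![γ, κ; κ, γ] : Matrix (Fin 2) (Fin 2) ℝ)) *ᵥ z) 0)
        = fun z : Fin 2 → ℝ => ((1 - Real.exp (t*(γ-κ)))/2 * z 0 + (1 + Real.exp (t*(γ-κ)))/2 * z 1) * ((1 + Real.exp (t*(γ-κ)))/2 * z 0 + (1 - Real.exp (t*(γ-κ)))/2 * z 1) := by
      funext z; simp only [hmv0, hmv1]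
    rw [h1, integral_quad ν h00 h01 h11]
    have he2 : Real.exp (t*(2*(γ-κ))) = Real.exp (t*(γ-κ)) * Real.exp (t*(γ-κ)) := by rw [← Real.exp_add]; ring_nf
    rw [he2]; ring
  have inner11 : ∀ t : ℝ, (∫ z : Fin 2 → ℝ, (NormedSpace.exp (t • (!![γ, κ; κ, γ] : Matrix (Fin 2) (Fin 2) ℝ)) *ᵥ z) 1 * (NormedSpace.exp (t • (!![γ, κ; κ, γ] : Matrix (Fin 2) (Fin 2) ℝ)) *ᵥ z) 1 ∂ν)
      = ((∫ z : Fin 2 → ℝ, z 0 * z 0 ∂ν) + 2*(∫ z : Fin 2 → ℝ, z 0 * z 1 ∂ν) + (∫ z : Fin 2 → ℝ, z 1 * z 1 ∂ν))/4 + ((-(∫ z : Fin 2 → ℝ, z 0 * z 0 ∂ν) + (∫ z : Fin 2 → ℝ, z 1 * z 1 ∂ν))/2) * Real.exp (t*(γ-κ)) + (((∫ z : Fin 2 → ℝ, z 0 * z 0 ∂ν) - 2*(∫ z : Fin 2 → ℝ, z 0 * z 1 ∂ν) + (∫ z : Fin 2 → ℝ, z 1 * z 1 ∂ν))/4) * Real.exp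 (t*(2*(γ-κ))) := by
    intro t
    have h1 : (fun z : Fin 2 → ℝ => (NormedSpace.exp (t • (!![γ, κ; κ, γ] : Matrix (Fin 2) (Fin 2) ℝ)) *ᵥ z) 1 * (NormedSpace.exp (t • (!![γ, κ; κ, γ] : Matrix (Fin 2) (Fin 2) ℝ)) *ᵥ z) 1)
        = fun z : Fin 2 → ℝ => ((1 - Real.exp (t*(γ-κ)))/2 * z 0 + (1 + Real.exp (t*(γ-κ)))/2 * z 1) * ((1 - Real.exp (t*(γ-κ)))/2 * z 0 + (1 + Real.exp (t*(γ-κ)))/2 * z 1) := by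
      funext z; simp only [hmv0, hmv1]
    rw [h1, integral_quad ν h00 h01 h11]
    have he2 : Real.exp (t*(2*(γ-κ))) = Real.exp (t*(γ-κ)) * Real.exp (t*(γ-κ)) := by rw [← Real.exp_add]; ring_nf
    rw [he2]; ring
  have hWv00 : W 0 0 = ((∫ z : Fin 2 → ℝ, z 0 * z 0 ∂ν) + 2*(∫ z : Fin 2 → ℝ, z 0 * z 1 ∂ν) + (∫ z : Fin 2 → ℝ, z 1 * z 1 ∂ν))/4 + (((∫ z : Fin 2 → ℝ, z 0 * z 0 ∂ν) - (∫ z : Fin 2 → ℝ, z 1 * z 1 ∂ν))/2) * c + (((∫ z : Fin 2 → ℝ, z 0 * z 0 ∂ν) - 2*(∫ z : Fin 2 → ℝ, z 0 * z 1 ∂ν) + (∫ z : Fin 2 → ℝ, z 1 * z 1 ∂ν))/4) * d := by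
    rw [hW 0 0, intervalIntegral.integral_congr (fun t _ => inner00 t),
      outer_int _ _ _ _ hlne, hexpl, hexp2l, hc, hd]
  have hWv01 : W 0 1 = ((∫ z : Fin 2 → ℝ, z 0 * z 0 ∂ν) + 2*(∫ z : Fin 2 → ℝ, z 0 * z 1 ∂ν) + (∫ z : Fin 2 → ℝ, z 1 * z 1 ∂ν))/4 + ((0:ℝ)) * c + ((-(∫ z : Fin 2 → ℝ, z 0 * z 0 ∂ν) + 2*(∫ z : Fin 2 → ℝ, z 0 * z 1 ∂ν) - (∫ z : Fin 2 → ℝ, z 1 * z 1 ∂ν))/4) * d := by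
    rw [hW 0 1, intervalIntegral.integral_congr (fun t _ => inner01 t),
      outer_int _ _ _ _ hlne, hexpl, hexp2l, hc, hd]
  have hWv10 : W 1 0 = ((∫ z : Fin 2 → ℝ, z 0 * z 0 ∂ν) + 2*(∫ z : Fin 2 → ℝ, z 0 * z 1 ∂ν) + (∫ z : Fin 2 → ℝ, z 1 * z 1 ∂ν))/4 + ((0:ℝ)) * c + ((-(∫ z : Fin 2 → ℝ, z 0 * z 0 ∂ν) + 2*(∫ z : Fin 2 → ℝ, z 0 * z 1 ∂ν) - (∫ z : Fin 2 → ℝ, z 1 * z 1 ∂ν))/4) * d := by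
    rw [hW 1 0, intervalIntegral.integral_congr (fun t _ => inner10 t),
      outer_int _ _ _ _ hlne, hexpl, hexp2l, hc, hd]
  have hWv11 : W 1 1 = ((∫ z : Fin 2 → ℝ, z 0 * z 0 ∂ν) + 2*(∫ z : Fin 2 → ℝ, z 0 * z 1 ∂ν) + (∫ z : Fin 2 → ℝ, z 1 * z 1 ∂ν))/4 + ((-(∫ z : Fin 2 → ℝ, z 0 * z 0 ∂ν) + (∫ z : Fin 2 → ℝ, z 1 * z 1 ∂ν))/2) * c + (((∫ z : Fin 2 → ℝ, z 0 * z 0 ∂ν) - 2*(∫ z : Fin 2 → ℝ, z 0 * z 1 ∂ν) + (∫ z : Fin 2 → ℝ, z 1 * z 1 ∂ν))/4) * d := by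
    rw [hW 1 1, intervalIntegral.integral_congr (fun t _ => inner11 t),
      outer_int _ _ _ _ hlne, hexpl, hexp2l, hc, hd]
  have hdetM : IsUnit M.det := by
    rw [hMval, Matrix.det_fin_two_of]
    have hdd : (1 + c)/2 * ((1 + c)/2) - (1 - c)/2 * ((1 - c)/2) = c := by ring
    rw [hdd]
    exact isUnit_iff_ne_zero.mpr hcne
  have key : M * (((1 / 4 : ℝ) * ∫ z : Fin 2 → ℝ, (z 0 + z 1) ^ 2 ∂ν) •
          (!![1, 1; 1, 1] : Matrix (Fin 2) (Fin 2) ℝ)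
        + ((1 / 2 : ℝ) * ∫ z : Fin 2 → ℝ, (z 0 ^ 2 - z 1 ^ 2) ∂ν) •
          (!![1, 0; 0, -1] : Matrix (Fin 2) (Fin 2) ℝ)
        + ((δ ^ 2 - 1) * Real.log δ / (8 * (δ - 1) ^ 2) * ∫ z : Fin 2 → ℝ, (z 0 - z 1) ^ 2 ∂ν) •
          (!![1, -1; -1, 1] : Matrix (Fin 2) (Fin 2) ℝ)) * M = W := by
    rw [hMval, hk3]
    ext i j
    fin_cases i <;> fin_cases j <;>
      (simp only [Fin.zero_eta, Fin.mk_zero, Fin.mk_one, Fin.isValue];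
       simp only [Matrix.mul_apply, Fin.sum_univ_two, Matrix.add_apply, Matrix.smul_apply,
        Matrix.cons_val', Matrix.cons_val_zero, Matrix.cons_val_one, Matrix.head_cons,
        Matrix.empty_val', Matrix.cons_val_fin_one, Matrix.head_fin_const, Matrix.of_apply,
        smul_eq_mul, hWv00, hWv01, hWv10, hWv11, hS, hT, hR]) <;>
      field_simp <;> ring
  calc M⁻¹ * W * M⁻¹ = M⁻¹ * (M * (((1 / 4 : ℝ) * ∫ z : Fin 2 → ℝ, (z 0 + z 1) ^ 2 ∂ν) •
          (!![1, 1; 1, 1] : Matrix (Fin 2) (Fin 2) ℝ)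
        + ((1 / 2 : ℝ) * ∫ z : Fin 2 → ℝ, (z 0 ^ 2 - z 1 ^ 2) ∂ν) •
          (!![1, 0; 0, -1] : Matrix (Fin 2) (Fin 2) ℝ)
        + ((δ ^ 2 - 1) * Real.log δ / (8 * (δ - 1) ^ 2) * ∫ z : Fin 2 → ℝ, (z 0 - z 1) ^ 2 ∂ν) •
          (!![1, -1; -1, 1] : Matrix (Fin 2) (Fin 2) ℝ)) * M) * M⁻¹ := by rw [key]
    _ = (M⁻¹ * M) * (((1 / 4 : ℝ) * ∫ z : Fin 2 → ℝ, (z 0 + z 1) ^ 2 ∂ν) •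
          (!![1, 1; 1, 1] : Matrix (Fin 2) (Fin 2) ℝ)
        + ((1 / 2 : ℝ) * ∫ z : Fin 2 → ℝ, (z 0 ^ 2 - z 1 ^ 2) ∂ν) •
          (!![1, 0; 0, -1] : Matrix (Fin 2) (Fin 2) ℝ)
        + ((δ ^ 2 - 1) * Real.log δ / (8 * (δ - 1) ^ 2) * ∫ z : Fin 2 → ℝ, (z 0 - z 1) ^ 2 ∂ν) •
          (!![1, -1; -1, 1] : Matrix (Fin 2) (Fin 2) ℝ)) * (M * M⁻¹) := by noncomm_ring
    _ = (((1 / 4 : ℝ) * ∫ z : Fin 2 → ℝ, (z 0 + z 1) ^ 2 ∂ν) •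
          (!![1, 1; 1, 1] : Matrix (Fin 2) (Fin 2) ℝ)
        + ((1 / 2 : ℝ) * ∫ z : Fin 2 → ℝ, (z 0 ^ 2 - z 1 ^ 2) ∂ν) •
          (!![1, 0; 0, -1] : Matrix (Fin 2) (Fin 2) ℝ)
        + ((δ ^ 2 - 1) * Real.log δ / (8 * (δ - 1) ^ 2) * ∫ z : Fin 2 → ℝ, (z 0 - z 1) ^ 2 ∂ν) •
          (!![1, -1; -1, 1] : Matrix (Fin 2) (Fin 2) ℝ)) := by
        rw [Matrix.nonsing_inv_mul M hdetM, Matrix.mul_nonsing_inv M hdetM, one_mul, mul_one]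
end

section
/- Let n ∈ ℕ, let x₁, …, xₙ ∈ ℝ² with the convention x₀ := 0, and set u_k := ⟨(1,1)ᵀ, x_k⟩ and v_k := ⟨(1,−1)ᵀ, x_k⟩ for k = 0, …, n. Assume n·Σ_{k=1}^n u_{k−1}² − (Σ_{k=1}^n u_{k−1})² > 0 and n·Σ_{k=1}^n v_{k−1}² − (Σ_{k=1}^n v_{k−1})² > 0. Then the function ℝ⁴ ∋ (ρ′, δ′, β̄′) ↦ Q_n(ρ′, δ′, β̄′) := Σ_{k=1}^n ‖x_k − (1/2)·[[ρ′+δ′, ρ′−δ′],[ρ′−δ′, ρ′+δ′]]·x_{k−1} − β̄′‖² has a unique global minimizer, given by ρ̂_n = (n·Σ_{k=1}^n u_k u_{k−1} − Σ_{k=1}^n u_k · Σ_{k=1}^n u_{k−1})/(n·Σ_{k=1}^n u_{k−1}² − (Σ_{k=1}^n u_{k−1})²), δ̂_n = (n·Σ_{k=1}^n v_k v_{k−1} − Σ_{k=1}^n v_k · Σ_{k=1}^n v_{k−1})/(n·Σ_{k=1}^n v_{k−1}² − (Σ_{k=1}^n v_{k−1})²), and β̂_n = (1/n)·Σ_{k=1}^n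 x_k − (1/(2n))·Σ_{k=1}^n [[u_{k−1}, v_{k−1}],[u_{k−1}, −v_{k−1}]]·(ρ̂_n, δ̂_n)ᵀ. -/
open Finset

lemma sum_sq_expand (n : ℕ) (y z : ℕ → ℝ) (a c a' c' : ℝ)
    (h1 : ∑ k ∈ Icc 1 n, z k * (y k - a * z k - c) = 0)
    (h2 : ∑ k ∈ Icc 1 n, (y k - a * z k - c) = 0) :
    ∑ k ∈ Icc 1 n, (y k - a' * z k - c') ^ 2
      = ∑ k ∈ Icc 1 n, (y k - a * z k - c) ^ 2
        + ((a - a') ^ 2 * ∑ k ∈ Icc 1 n, z k ^ 2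
           + 2 * (a - a') * (c - c') * ∑ k ∈ Icc 1 n, z k
           + (n : ℝ) * (c - c') ^ 2) := by
  have key : ∀ k ∈ Icc 1 n, (y k - a' * z k - c') ^ 2
      = (y k - a * z k - c) ^ 2 + (a - a') ^ 2 * z k ^ 2
        + 2 * (a - a') * (c - c') * z k + (c - c') ^ 2
        + 2 * (a - a') * (z k * (y k - a * z k - c))
        + 2 * (c - c') * (y k - a * z k - c) := fun k _ => by ring
  rw [Finset.sum_congr rfl key]
  simp only [Finset.sum_add_distrib, ← Finset.mul_sum, h1, h2, Finset.sum_const,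
    Nat.card_Icc, nsmul_eq_mul]
  push_cast
  ring

lemma quad_pos {n : ℕ} {U2 U1 : ℝ} (hn : 0 < n)
    (hD : 0 < (n : ℝ) * U2 - U1 ^ 2) (p q : ℝ) :
    0 ≤ p ^ 2 * U2 + 2 * p * q * U1 + (n : ℝ) * q ^ 2 ∧
    (p ^ 2 * U2 + 2 * p * q * U1 + (n : ℝ) * q ^ 2 = 0 → p = 0 ∧ q = 0) := by
  have hn' : (0 : ℝ) < n := by exact_mod_cast hn
  constructor
  · nlinarith [sq_nonneg ((n : ℝ) * q + p * U1), sq_nonneg p,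
      mul_nonneg (sq_nonneg p) hD.le]
  · intro h
    have hsum : ((n : ℝ) * q + p * U1) ^ 2 + p ^ 2 * ((n : ℝ) * U2 - U1 ^ 2) = 0 := by
      linear_combination (n : ℝ) * h
    have hpd : p ^ 2 * ((n : ℝ) * U2 - U1 ^ 2) = 0 :=
      le_antisymm (by nlinarith [sq_nonneg ((n : ℝ) * q + p * U1)])
        (mul_nonneg (sq_nonneg p) hD.le)
    have hp : p = 0 := by
      have hp2 : p ^ 2 = 0 := (mul_eq_zero.mp hpd).resolve_right hD.ne'
      exact pow_eq_zero_iff two_ne_zero |>.mp hp2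
    subst hp
    refine ⟨rfl, ?_⟩
    have hq' : (n : ℝ) * q ^ 2 = 0 := by linear_combination h
    have hq2 : q ^ 2 = 0 := (mul_eq_zero.mp hq').resolve_left hn'.ne'
    exact pow_eq_zero_iff two_ne_zero |>.mp hq2

lemma slr_min (n : ℕ) (hn : 0 < n) (y z : ℕ → ℝ)
    (hD : 0 < (n : ℝ) * ∑ k ∈ Icc 1 n, z k ^ 2 - (∑ k ∈ Icc 1 n, z k) ^ 2)
    (a c : ℝ)
    (ha : a = ((n : ℝ) * ∑ k ∈ Icc 1 n, y k * z k
        - (∑ k ∈ Icc 1 n, y k) * ∑ k ∈ Icc 1 n, z k)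
      / ((n : ℝ) * ∑ k ∈ Icc 1 n, z k ^ 2 - (∑ k ∈ Icc 1 n, z k) ^ 2))
    (hc : c = ((∑ k ∈ Icc 1 n, y k) - a * ∑ k ∈ Icc 1 n, z k) / n) :
    ∀ a' c',
      ∑ k ∈ Icc 1 n, (y k - a * z k - c) ^ 2 ≤ ∑ k ∈ Icc 1 n, (y k - a' * z k - c') ^ 2
      ∧ (∑ k ∈ Icc 1 n, (y k - a' * z k - c') ^ 2 = ∑ k ∈ Icc 1 n, (y k - a * z k - c) ^ 2
          → a' = a ∧ c' = c) := by
  have hn' : (0 : ℝ) < n := by exact_mod_cast hn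
  have hD' : ((n : ℝ) * ∑ k ∈ Icc 1 n, z k ^ 2 - (∑ k ∈ Icc 1 n, z k) ^ 2) ≠ 0 := ne_of_gt hD
  have h2 : ∑ k ∈ Icc 1 n, (y k - a * z k - c) = 0 := by
    have e : ∑ k ∈ Icc 1 n, (y k - a * z k - c)
        = (∑ k ∈ Icc 1 n, y k) - a * (∑ k ∈ Icc 1 n, z k) - (n : ℝ) * c := by
      simp only [Finset.sum_sub_distrib, ← Finset.mul_sum, Finset.sum_const,
        Nat.card_Icc, nsmul_eq_mul]
      push_cast
      ring
    rw [e, hc]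
    field_simp
    ring
  have h1 : ∑ k ∈ Icc 1 n, z k * (y k - a * z k - c) = 0 := by
    have e : ∑ k ∈ Icc 1 n, z k * (y k - a * z k - c)
        = (∑ k ∈ Icc 1 n, y k * z k) - a * (∑ k ∈ Icc 1 n, z k ^ 2)
          - c * (∑ k ∈ Icc 1 n, z k) := by
      have : ∀ k ∈ Icc 1 n, z k * (y k - a * z k - c)
          = y k * z k - a * z k ^ 2 - c * z k := fun k _ => by ring
      rw [Finset.sum_congr rfl this]
      simp only [Finset.sum_sub_distrib, ← Finset.mul_sum]
    rw [e, hc, ha]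
    field_simp
    ring
  intro a' c'
  have hexp := sum_sq_expand n y z a c a' c' h1 h2
  have hq := quad_pos hn hD (a - a') (c - c')
  constructor
  · rw [hexp]; linarith [hq.1]
  · intro heq
    rw [hexp] at heq
    have h0 : (a - a') ^ 2 * ∑ k ∈ Icc 1 n, z k ^ 2
        + 2 * (a - a') * (c - c') * ∑ k ∈ Icc 1 n, z k
        + (n : ℝ) * (c - c') ^ 2 = 0 := by linarith
    obtain ⟨hp, hqq⟩ := hq.2 h0
    constructor <;> linarith


/-- **Existence and uniqueness of the CLS estimator.**
Let `x₀ := 0` and `x₁, …, xₙ ∈ ℝ²`, with `u_k := x_k(0) + x_k(1)` and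
`v_k := x_k(0) − x_k(1)`.  If `n·Σ u_{k−1}² − (Σ u_{k−1})² > 0` and
`n·Σ v_{k−1}² − (Σ v_{k−1})² > 0`, then the conditional least squares objective
`Q(ρ′, δ′, β̄′) = Σ_{k=1}^n ‖x_k − (1/2)·[[ρ′+δ′, ρ′−δ′],[ρ′−δ′, ρ′+δ′]]·x_{k−1} − β̄′‖²`
(Euclidean norm, written via coordinates) has a unique global minimizer `(ρ̂, δ̂, β̂)`,
given by the explicit formulas of the paper. -/
theorem cls_estimator_unique_minimizer
    (n : ℕ) (hn : 0 < n) (x : ℕ → Fin 2 → ℝ) (hx0 : x 0 = 0)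
    (u v : ℕ → ℝ)
    (hu : ∀ k, u k = x k 0 + x k 1) (hv : ∀ k, v k = x k 0 - x k 1)
    (hDu : 0 < (n : ℝ) * ∑ k ∈ Icc 1 n, u (k - 1) ^ 2 - (∑ k ∈ Icc 1 n, u (k - 1)) ^ 2)
    (hDv : 0 < (n : ℝ) * ∑ k ∈ Icc 1 n, v (k - 1) ^ 2 - (∑ k ∈ Icc 1 n, v (k - 1)) ^ 2)
    (Q : ℝ → ℝ → (Fin 2 → ℝ) → ℝ)
    (hQ : ∀ (r d : ℝ) (b : Fin 2 → ℝ), Q r d b = ∑ k ∈ Icc 1 n,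
        ((x k 0 - ((r + d) * x (k - 1) 0 + (r - d) * x (k - 1) 1) / 2 - b 0) ^ 2
          + (x k 1 - ((r - d) * x (k - 1) 0 + (r + d) * x (k - 1) 1) / 2 - b 1) ^ 2))
    (ρhat δhat : ℝ) (βhat : Fin 2 → ℝ)
    (hρhat : ρhat =
      ((n : ℝ) * ∑ k ∈ Icc 1 n, u k * u (k - 1)
          - (∑ k ∈ Icc 1 n, u k) * ∑ k ∈ Icc 1 n, u (k - 1))
        / ((n : ℝ) * ∑ k ∈ Icc 1 n, u (k - 1) ^ 2 - (∑ k ∈ Icc 1 n, u (k - 1)) ^ 2))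
    (hδhat : δhat =
      ((n : ℝ) * ∑ k ∈ Icc 1 n, v k * v (k - 1)
          - (∑ k ∈ Icc 1 n, v k) * ∑ k ∈ Icc 1 n, v (k - 1))
        / ((n : ℝ) * ∑ k ∈ Icc 1 n, v (k - 1) ^ 2 - (∑ k ∈ Icc 1 n, v (k - 1)) ^ 2))
    (hβhat0 : βhat 0 = (1 / (n : ℝ)) * ∑ k ∈ Icc 1 n, x k 0
        - (1 / (2 * (n : ℝ))) * ∑ k ∈ Icc 1 n, (u (k - 1) * ρhat + v (k - 1) * δhat))
    (hβhat1 : βhat 1 = (1 / (n : ℝ)) * ∑ k ∈ Icc 1 n, x k 1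
        - (1 / (2 * (n : ℝ))) * ∑ k ∈ Icc 1 n, (u (k - 1) * ρhat - v (k - 1) * δhat)) :
    ∀ (r d : ℝ) (b : Fin 2 → ℝ),
      (∀ (r' d' : ℝ) (b' : Fin 2 → ℝ), Q r d b ≤ Q r' d' b')
        ↔ (r = ρhat ∧ d = δhat ∧ b = βhat) := by
  -- Reduce Q to two decoupled simple linear regressions via u = x₀+x₁, v = x₀−x₁.
  have hQ2 : ∀ (r d : ℝ) (b : Fin 2 → ℝ), 2 * Q r d b
      = (∑ k ∈ Icc 1 n, (u k - r * u (k - 1) - (b 0 + b 1)) ^ 2)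
        + ∑ k ∈ Icc 1 n, (v k - d * v (k - 1) - (b 0 - b 1)) ^ 2 := by
    intro r d b
    rw [hQ, ← Finset.sum_add_distrib, Finset.mul_sum]
    refine Finset.sum_congr rfl fun k _ => ?_
    rw [hu k, hu (k - 1), hv k, hv (k - 1)]
    ring
  have hsum_u : ∑ k ∈ Icc 1 n, u k
      = ∑ k ∈ Icc 1 n, x k 0 + ∑ k ∈ Icc 1 n, x k 1 := by
    rw [← Finset.sum_add_distrib]; exact Finset.sum_congr rfl fun k _ => hu k
  have hsum_v : ∑ k ∈ Icc 1 n, v k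
      = ∑ k ∈ Icc 1 n, x k 0 - ∑ k ∈ Icc 1 n, x k 1 := by
    rw [← Finset.sum_sub_distrib]; exact Finset.sum_congr rfl fun k _ => hv k
  have h2sumu : ∑ k ∈ Icc 1 n, (u (k - 1) * ρhat + v (k - 1) * δhat)
      + ∑ k ∈ Icc 1 n, (u (k - 1) * ρhat - v (k - 1) * δhat)
      = 2 * ρhat * ∑ k ∈ Icc 1 n, u (k - 1) := by
    rw [← Finset.sum_add_distrib, Finset.mul_sum]
    exact Finset.sum_congr rfl fun k _ => by ring
  have h2sumv : ∑ k ∈ Icc 1 n, (u (k - 1) * ρhat + v (k - 1) * δhat)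
      - ∑ k ∈ Icc 1 n, (u (k - 1) * ρhat - v (k - 1) * δhat)
      = 2 * δhat * ∑ k ∈ Icc 1 n, v (k - 1) := by
    rw [← Finset.sum_sub_distrib, Finset.mul_sum]
    exact Finset.sum_congr rfl fun k _ => by ring
  have hS : βhat 0 + βhat 1
      = ((∑ k ∈ Icc 1 n, u k) - ρhat * ∑ k ∈ Icc 1 n, u (k - 1)) / n := by
    rw [hβhat0, hβhat1, hsum_u]
    linear_combination (-(1 / (2 * (n : ℝ)))) * h2sumu
  have hT : βhat 0 - βhat 1
      = ((∑ k ∈ Icc 1 n, v k) - δhat * ∑ k ∈ Icc 1 n, v (k - 1)) / n := by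
    rw [hβhat0, hβhat1, hsum_v]
    linear_combination (-(1 / (2 * (n : ℝ)))) * h2sumv
  have HU := slr_min n hn u (fun k => u (k - 1)) hDu ρhat (βhat 0 + βhat 1) hρhat hS
  have HV := slr_min n hn v (fun k => v (k - 1)) hDv δhat (βhat 0 - βhat 1) hδhat hT
  intro r d b
  constructor
  · intro hmin
    have hle : Q ρhat δhat βhat ≤ Q r d b := by
      have e1 := hQ2 ρhat δhat βhat
      have e2 := hQ2 r d b
      have i1 := (HU r (b 0 + b 1)).1
      have i2 := (HV d (b 0 - b 1)).1
      linarith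
    have heq : Q r d b = Q ρhat δhat βhat := le_antisymm (hmin ρhat δhat βhat) hle
    have e1 := hQ2 ρhat δhat βhat
    have e2 := hQ2 r d b
    have i1 := (HU r (b 0 + b 1)).1
    have i2 := (HV d (b 0 - b 1)).1
    have eqF : ∑ k ∈ Icc 1 n, (u k - r * u (k - 1) - (b 0 + b 1)) ^ 2
        = ∑ k ∈ Icc 1 n, (u k - ρhat * u (k - 1) - (βhat 0 + βhat 1)) ^ 2 := by
      linarith
    have eqG : ∑ k ∈ Icc 1 n, (v k - d * v (k - 1) - (b 0 - b 1)) ^ 2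
        = ∑ k ∈ Icc 1 n, (v k - δhat * v (k - 1) - (βhat 0 - βhat 1)) ^ 2 := by
      linarith
    obtain ⟨hr, hbs⟩ := (HU r (b 0 + b 1)).2 eqF
    obtain ⟨hd, hbt⟩ := (HV d (b 0 - b 1)).2 eqG
    refine ⟨hr, hd, ?_⟩
    funext i
    fin_cases i
    · show b 0 = βhat 0; linarith
    · show b 1 = βhat 1; linarith
  · rintro ⟨rfl, rfl, rfl⟩
    intro r' d' b'
    have e1 := hQ2 r d b
    have e2 := hQ2 r' d' b'
    have i1 := (HU r' (b' 0 + b' 1)).1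
    have i2 := (HV d' (b' 0 - b' 1)).1
    linarith
end

section
/- Let n ∈ ℕ, let x₁, …, xₙ ∈ ℝ² with x₀ := 0, and set u_k := ⟨(1,1)ᵀ, x_k⟩, v_k := ⟨(1,−1)ᵀ, x_k⟩. For k = 1, …, n define the 4×2 matrix F_{k−1} whose top 2×2 block is (1/2)·[[u_{k−1}, v_{k−1}],[u_{k−1}, −v_{k−1}]]ᵀ and whose bottom 2×2 block is the identity I₂, and let G_n := Σ_{k=1}^n F_{k−1}·F_{k−1}ᵀ ∈ ℝ^{4×4}. If n·Σ_{k=1}^n u_{k−1}² − (Σ_{k=1}^n u_{k−1})² > 0 and n·Σ_{k=1}^n v_{k−1}² − (Σ_{k=1}^n v_{k−1})² > 0, then G_n is positive definite, i.e., γᵀ·G_n·γ > 0 for every γ ∈ ℝ⁴ with γ ≠ 0. -/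
open Matrix Finset

/-- If the quadratic form values `w k * c` are constant with nonzero `c` on `Icc 1 n`,
the discriminant vanishes. -/
lemma disc_aux (n : ℕ) (w : ℕ → ℝ) (c d : ℝ) (hc : c ≠ 0)
    (h : ∀ k ∈ Icc 1 n, w (k - 1) * c + d = 0) :
    (n : ℝ) * ∑ k ∈ Icc 1 n, w (k - 1) ^ 2 - (∑ k ∈ Icc 1 n, w (k - 1)) ^ 2 = 0 := by
  have hw : ∀ k ∈ Icc 1 n, w (k - 1) = -d / c := by
    intro k hk
    have := h k hk
    field_simp
    linarith
  have h1 : (∑ k ∈ Icc 1 n, w (k - 1)) = (n : ℝ) * (-d / c) := by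
    rw [Finset.sum_congr rfl hw, Finset.sum_const, Nat.card_Icc]
    simp [nsmul_eq_mul]
  have h2 : (∑ k ∈ Icc 1 n, w (k - 1) ^ 2) = (n : ℝ) * (-d / c) ^ 2 := by
    have : ∀ k ∈ Icc 1 n, w (k - 1) ^ 2 = (-d / c) ^ 2 := fun k hk => by rw [hw k hk]
    rw [Finset.sum_congr rfl this, Finset.sum_const, Nat.card_Icc]
    simp [nsmul_eq_mul]
  rw [h1, h2]; ring

/-- Positive definiteness of the Gram matrix `G_n = Σ_{k=1}^n F_{k−1}·F_{k−1}ᵀ`,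
where `F_{k−1}` is the 4×2 matrix with top 2×2 block
`(1/2)·[[u_{k−1}, v_{k−1}],[u_{k−1}, −v_{k−1}]]ᵀ` and bottom 2×2 block `I₂`,
`u_k := x_k(0)+x_k(1)`, `v_k := x_k(0)−x_k(1)` (with `x₀ := 0`), under the
non-degeneracy assumptions `n·Σ u_{k−1}² − (Σ u_{k−1})² > 0` and
`n·Σ v_{k−1}² − (Σ v_{k−1})² > 0`. -/
theorem gram_matrix_pos_def
    (n : ℕ) (hn : 0 < n) (x : ℕ → Fin 2 → ℝ) (hx0 : x 0 = 0)
    (u v : ℕ → ℝ)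
    (hu : ∀ k, u k = x k 0 + x k 1) (hv : ∀ k, v k = x k 0 - x k 1)
    (F : ℕ → Matrix (Fin 4) (Fin 2) ℝ)
    (hF : ∀ k, F k = !![u k / 2, u k / 2; v k / 2, -(v k) / 2; 1, 0; 0, 1])
    (G : Matrix (Fin 4) (Fin 4) ℝ)
    (hG : G = ∑ k ∈ Icc 1 n, F (k - 1) * (F (k - 1))ᵀ)
    (hDu : 0 < (n : ℝ) * ∑ k ∈ Icc 1 n, u (k - 1) ^ 2 - (∑ k ∈ Icc 1 n, u (k - 1)) ^ 2)
    (hDv : 0 < (n : ℝ) * ∑ k ∈ Icc 1 n, v (k - 1) ^ 2 - (∑ k ∈ Icc 1 n, v (k - 1)) ^ 2) :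
    ∀ γ : Fin 4 → ℝ, γ ≠ 0 → 0 < γ ⬝ᵥ (G *ᵥ γ) := by
  intro γ hγ
  have hterm : ∀ k, γ ⬝ᵥ ((F k * (F k)ᵀ) *ᵥ γ) =
      (u k / 2 * γ 0 + v k / 2 * γ 1 + γ 2) ^ 2 +
      (u k / 2 * γ 0 - v k / 2 * γ 1 + γ 3) ^ 2 := by
    intro k
    rw [hF k]
    simp [Matrix.mul_apply, Matrix.mulVec, dotProduct, Fin.sum_univ_four,
      Fin.sum_univ_two, Matrix.transpose_apply, Matrix.cons_transpose, Matrix.vecHead,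
      Matrix.vecTail]
    ring
  have hquad : γ ⬝ᵥ (G *ᵥ γ) = ∑ k ∈ Icc 1 n,
      ((u (k - 1) / 2 * γ 0 + v (k - 1) / 2 * γ 1 + γ 2) ^ 2 +
       (u (k - 1) / 2 * γ 0 - v (k - 1) / 2 * γ 1 + γ 3) ^ 2) := by
    have hsm : (∑ k ∈ Icc 1 n, F (k - 1) * (F (k - 1))ᵀ) *ᵥ γ
        = ∑ k ∈ Icc 1 n, (F (k - 1) * (F (k - 1))ᵀ) *ᵥ γ :=
      map_sum (Matrix.mulVec.addMonoidHomLeft γ) _ _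
    rw [hG, hsm]
    rw [show γ ⬝ᵥ ∑ k ∈ Icc 1 n, (F (k - 1) * (F (k - 1))ᵀ) *ᵥ γ
        = ∑ k ∈ Icc 1 n, γ ⬝ᵥ ((F (k - 1) * (F (k - 1))ᵀ) *ᵥ γ) by
      simp only [dotProduct, Finset.sum_apply, Finset.mul_sum]
      exact Finset.sum_comm]
    exact Finset.sum_congr rfl fun k _ => hterm (k - 1)
  rw [hquad]
  have hnonneg : ∀ k ∈ Icc 1 n,
      0 ≤ (u (k - 1) / 2 * γ 0 + v (k - 1) / 2 * γ 1 + γ 2) ^ 2 +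
          (u (k - 1) / 2 * γ 0 - v (k - 1) / 2 * γ 1 + γ 3) ^ 2 :=
    fun k _ => by positivity
  rcases lt_or_eq_of_le (Finset.sum_nonneg hnonneg) with h | h
  · exact h
  exfalso
  have hzero := (Finset.sum_eq_zero_iff_of_nonneg hnonneg).mp h.symm
  have ha : ∀ k ∈ Icc 1 n, u (k - 1) / 2 * γ 0 + v (k - 1) / 2 * γ 1 + γ 2 = 0 := by
    intro k hk
    have := hzero k hk
    nlinarith [sq_nonneg (u (k - 1) / 2 * γ 0 + v (k - 1) / 2 * γ 1 + γ 2),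
      sq_nonneg (u (k - 1) / 2 * γ 0 - v (k - 1) / 2 * γ 1 + γ 3)]
  have hb : ∀ k ∈ Icc 1 n, u (k - 1) / 2 * γ 0 - v (k - 1) / 2 * γ 1 + γ 3 = 0 := by
    intro k hk
    have := hzero k hk
    nlinarith [sq_nonneg (u (k - 1) / 2 * γ 0 + v (k - 1) / 2 * γ 1 + γ 2),
      sq_nonneg (u (k - 1) / 2 * γ 0 - v (k - 1) / 2 * γ 1 + γ 3)]
  have hsum : ∀ k ∈ Icc 1 n, u (k - 1) * γ 0 + (γ 2 + γ 3) = 0 := by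
    intro k hk; have h1 := ha k hk; have h2 := hb k hk; linarith
  have hdiff : ∀ k ∈ Icc 1 n, v (k - 1) * γ 1 + (γ 2 - γ 3) = 0 := by
    intro k hk; have h1 := ha k hk; have h2 := hb k hk; linarith
  have hγ0 : γ 0 = 0 := by
    by_contra hc
    exact absurd (disc_aux n u (γ 0) (γ 2 + γ 3) hc hsum) (ne_of_gt hDu)
  have hγ1 : γ 1 = 0 := by
    by_contra hc
    exact absurd (disc_aux n v (γ 1) (γ 2 - γ 3) hc hdiff) (ne_of_gt hDv)
  have h1mem : (1 : ℕ) ∈ Icc 1 n := Finset.mem_Icc.mpr ⟨le_refl 1, hn⟩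
  have e1 := hsum 1 h1mem
  have e2 := hdiff 1 h1mem
  rw [hγ0] at e1; rw [hγ1] at e2
  have hγ2 : γ 2 = 0 := by linarith
  have hγ3 : γ 3 = 0 := by linarith
  apply hγ
  funext i
  fin_cases i <;> simp [hγ0, hγ1, hγ2, hγ3]
end

section
/- Assume γ + κ = 0 with κ > 0 and let δ := e^{γ−κ} ∈ (0,1). Let C₁, C₂ be arbitrary real 2×2 matrices, set ũ := (1/2, 1/2)ᵀ, define V_i := Σ_{ℓ=1}^2 ∫₀¹ ⟨exp((1−s)·B̃)·e_i, e_ℓ⟩ · exp(s·B̃)·C_ℓ·exp(s·B̃)ᵀ ds for i ∈ {1,2}, and put C̃ := ũ₁·V₁ + ũ₂·V₂ and C̄ := ũ₁·C₁ + ũ₂·C₂. Then vᵀ·C̃·v = ((1−δ²)/(2·log(δ⁻¹))) · vᵀ·C̄·v. -/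
open Matrix intervalIntegral

lemma exp_sym2 (a b : ℝ) :
    NormedSpace.exp (!![a, b; b, a] : Matrix (Fin 2) (Fin 2) ℝ) =
      !![(Real.exp (a+b) + Real.exp (a-b))/2, (Real.exp (a+b) - Real.exp (a-b))/2;
         (Real.exp (a+b) - Real.exp (a-b))/2, (Real.exp (a+b) + Real.exp (a-b))/2] := by
  set U : (Matrix (Fin 2) (Fin 2) ℝ)ˣ :=
    ⟨!![1,1;1,-1], !![1/2,1/2;1/2,-1/2],
      by rw [Matrix.mul_fin_two, Matrix.one_fin_two]; norm_num,
      by rw [Matrix.mul_fin_two, Matrix.one_fin_two]; norm_num⟩ with hU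
  have hdiag : (Matrix.diagonal ![a+b, a-b] : Matrix (Fin 2) (Fin 2) ℝ)
      = !![a+b, 0; 0, a-b] := by
    ext i j; fin_cases i <;> fin_cases j <;> simp [Matrix.diagonal]
  have hA : (!![a, b; b, a] : Matrix (Fin 2) (Fin 2) ℝ)
      = (U : Matrix (Fin 2) (Fin 2) ℝ) * Matrix.diagonal ![a+b, a-b]
          * ((U⁻¹ : (Matrix (Fin 2) (Fin 2) ℝ)ˣ) : Matrix (Fin 2) (Fin 2) ℝ) := by
    rw [hdiag]
    show _ = _ * _ * U.inv
    rw [hU]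
    simp only [Matrix.mul_fin_two]
    norm_num
    refine ⟨⟨?_, ?_⟩, ?_, ?_⟩ <;> ring
  rw [hA, Matrix.exp_units_conj, Matrix.exp_diagonal]
  have hdiag2 : (Matrix.diagonal (NormedSpace.exp ![a+b, a-b]) : Matrix (Fin 2) (Fin 2) ℝ)
      = !![Real.exp (a+b), 0; 0, Real.exp (a-b)] := by
    ext i j; fin_cases i <;> fin_cases j <;>
      simp [Matrix.diagonal, Pi.coe_exp, Real.exp_eq_exp_ℝ]
  rw [hdiag2]
  show (U : Matrix (Fin 2) (Fin 2) ℝ) * _ * U.inv = _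
  rw [hU]
  simp only [Matrix.mul_fin_two]
  ext i j; fin_cases i <;> fin_cases j <;> simp <;> ring

lemma exp_sym2_smul (γ κ : ℝ) (hcrit : γ + κ = 0) (t : ℝ) :
    NormedSpace.exp (t • (!![γ, κ; κ, γ] : Matrix (Fin 2) (Fin 2) ℝ)) =
      !![(1 + Real.exp ((γ-κ)*t))/2, (1 - Real.exp ((γ-κ)*t))/2;
         (1 - Real.exp ((γ-κ)*t))/2, (1 + Real.exp ((γ-κ)*t))/2] := by
  have h1 : t • (!![γ, κ; κ, γ] : Matrix (Fin 2) (Fin 2) ℝ) = !![t*γ, t*κ; t*κ, t*γ] := by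
    ext i j; fin_cases i <;> fin_cases j <;> simp
  rw [h1, exp_sym2]
  have h2 : t*γ + t*κ = 0 := by rw [← mul_add, hcrit, mul_zero]
  have h3 : t*γ - t*κ = (γ-κ)*t := by ring
  rw [h2, h3, Real.exp_zero]
open Matrix intervalIntegral

lemma comb8 (f1 f2 f3 f4 f5 f6 f7 f8 g : ℝ → ℝ)
    (h1 : IntervalIntegrable f1 MeasureTheory.volume 0 1)
    (h2 : IntervalIntegrable f2 MeasureTheory.volume 0 1)
    (h3 : IntervalIntegrable f3 MeasureTheory.volume 0 1)
    (h4 : IntervalIntegrable f4 MeasureTheory.volume 0 1)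
    (h5 : IntervalIntegrable f5 MeasureTheory.volume 0 1)
    (h6 : IntervalIntegrable f6 MeasureTheory.volume 0 1)
    (h7 : IntervalIntegrable f7 MeasureTheory.volume 0 1)
    (h8 : IntervalIntegrable f8 MeasureTheory.volume 0 1)
    (hg : Set.EqOn (fun s => f1 s + f2 s - (f3 s + f4 s) - (f5 s + f6 s) + (f7 s + f8 s)) g
      (Set.uIcc (0:ℝ) 1)) :
    ((∫ s in (0:ℝ)..1, f1 s) + (∫ s in (0:ℝ)..1, f2 s))
      - ((∫ s in (0:ℝ)..1, f3 s) + (∫ s in (0:ℝ)..1, f4 s))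
      - ((∫ s in (0:ℝ)..1, f5 s) + (∫ s in (0:ℝ)..1, f6 s))
      + ((∫ s in (0:ℝ)..1, f7 s) + (∫ s in (0:ℝ)..1, f8 s))
      = ∫ s in (0:ℝ)..1, g s := by
  rw [← integral_add h1 h2, ← integral_add h3 h4, ← integral_add h5 h6, ← integral_add h7 h8,
    ← integral_sub (h1.add h2) (h3.add h4),
    ← integral_sub ((h1.add h2).sub (h3.add h4)) (h5.add h6),
    ← integral_add (((h1.add h2).sub (h3.add h4)).sub (h5.add h6)) (h7.add h8)]
  exact integral_congr hg

lemma comb2 (f1 f2 g : ℝ → ℝ)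
    (h1 : IntervalIntegrable f1 MeasureTheory.volume 0 1)
    (h2 : IntervalIntegrable f2 MeasureTheory.volume 0 1)
    (hg : Set.EqOn (fun s => 1/2 * f1 s + 1/2 * f2 s) g (Set.uIcc (0:ℝ) 1)) :
    1/2 * (∫ s in (0:ℝ)..1, f1 s) + 1/2 * (∫ s in (0:ℝ)..1, f2 s)
      = ∫ s in (0:ℝ)..1, g s := by
  rw [← integral_const_mul, ← integral_const_mul,
    ← integral_add (h1.const_mul _) (h2.const_mul _)]
  exact integral_congr hg
set_option maxHeartbeats 1000000 in
/-- In the doubly symmetric critical case `γ + κ = 0`, `κ > 0`, with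
`δ = e^{γ−κ} ∈ (0,1)`, arbitrary real 2×2 matrices `C₁, C₂`, `ũ = (1/2, 1/2)ᵀ`,
`V_i = Σ_{ℓ=1}^2 ∫₀¹ ⟨exp((1−s)·B̃)e_i, e_ℓ⟩·exp(s·B̃)·C_ℓ·exp(s·B̃)ᵀ ds`
(entrywise integrals), `C̃ = ũ₁·V₁ + ũ₂·V₂` and `C̄ = ũ₁·C₁ + ũ₂·C₂`, one has
`vᵀ·C̃·v = ((1−δ²)/(2·log(δ⁻¹)))·vᵀ·C̄·v`, where `v = (1,−1)ᵀ`. -/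
theorem vCtv_eq (γ κ : ℝ) (hcrit : γ + κ = 0) (hκ : 0 < κ)
    (δ : ℝ) (hδ : δ = Real.exp (γ - κ))
    (C : Fin 2 → Matrix (Fin 2) (Fin 2) ℝ)
    (V : Fin 2 → Matrix (Fin 2) (Fin 2) ℝ)
    (hV : ∀ i a b, V i a b = ∑ ℓ : Fin 2, ∫ s in (0:ℝ)..1,
      ((NormedSpace.exp ((1 - s) • (!![γ, κ; κ, γ] : Matrix (Fin 2) (Fin 2) ℝ))
          *ᵥ (Pi.single i 1 : Fin 2 → ℝ)) ⬝ᵥ (Pi.single ℓ 1 : Fin 2 → ℝ))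
        * ((NormedSpace.exp (s • (!![γ, κ; κ, γ] : Matrix (Fin 2) (Fin 2) ℝ))
            * C ℓ
            * (NormedSpace.exp (s • (!![γ, κ; κ, γ] : Matrix (Fin 2) (Fin 2) ℝ)))ᵀ) a b))
    (Ct Cb : Matrix (Fin 2) (Fin 2) ℝ)
    (hCt : Ct = (1 / 2 : ℝ) • V 0 + (1 / 2 : ℝ) • V 1)
    (hCb : Cb = (1 / 2 : ℝ) • C 0 + (1 / 2 : ℝ) • C 1) :
    (![1, -1] : Fin 2 → ℝ) ⬝ᵥ (Ct *ᵥ (![1, -1] : Fin 2 → ℝ))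
      = (1 - δ ^ 2) / (2 * Real.log δ⁻¹)
          * ((![1, -1] : Fin 2 → ℝ) ⬝ᵥ (Cb *ᵥ (![1, -1] : Fin 2 → ℝ))) := by
  obtain ⟨c, hcdef⟩ : ∃ c : ℝ, c = γ - κ := ⟨γ - κ, rfl⟩
  rw [← hcdef] at hδ
  have hc : c ≠ 0 := by rw [hcdef]; intro h; nlinarith
  have hexp := exp_sym2_smul γ κ hcrit
  set Q : Fin 2 → ℝ := fun ℓ => C ℓ 0 0 - C ℓ 0 1 - C ℓ 1 0 + C ℓ 1 1 with hQ
  have key0 : (![1, -1] : Fin 2 → ℝ) ⬝ᵥ (V 0 *ᵥ (![1, -1] : Fin 2 → ℝ))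
      = ∫ s in (0:ℝ)..1,
          ((1 + Real.exp (c*(1-s)))/2 * ((Real.exp (c*s))^2 * Q 0)
            + (1 - Real.exp (c*(1-s)))/2 * ((Real.exp (c*s))^2 * Q 1)) := by
    have hqf : (![1, -1] : Fin 2 → ℝ) ⬝ᵥ (V 0 *ᵥ (![1, -1] : Fin 2 → ℝ))
        = V 0 0 0 - V 0 0 1 - V 0 1 0 + V 0 1 1 := by
      simp [dotProduct, Matrix.mulVec, Fin.sum_univ_two]
      ring
    rw [hqf, hV 0 0 0, hV 0 0 1, hV 0 1 0, hV 0 1 1]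
    simp only [Fin.sum_univ_two, hexp, ← hcdef, Matrix.mulVec_single_one, Matrix.col_apply, dotProduct_single,
      mul_one, Matrix.mul_apply, Matrix.transpose_apply, Matrix.of_apply,
      Matrix.cons_val', Matrix.cons_val_zero, Matrix.cons_val_one, Matrix.head_cons,
      Matrix.empty_val', Matrix.cons_val_fin_one, Matrix.head_fin_const]
    refine comb8 _ _ _ _ _ _ _ _ _ ?_ ?_ ?_ ?_ ?_ ?_ ?_ ?_ ?_ <;>
      first
      | (apply Continuous.intervalIntegrable; fun_prop)
      | (intro s _; simp only [hQ]; ring)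
  have key1 : (![1, -1] : Fin 2 → ℝ) ⬝ᵥ (V 1 *ᵥ (![1, -1] : Fin 2 → ℝ))
      = ∫ s in (0:ℝ)..1,
          ((1 + Real.exp (c*(1-s)))/2 * ((Real.exp (c*s))^2 * Q 1)
            + (1 - Real.exp (c*(1-s)))/2 * ((Real.exp (c*s))^2 * Q 0)) := by
    have hqf : (![1, -1] : Fin 2 → ℝ) ⬝ᵥ (V 1 *ᵥ (![1, -1] : Fin 2 → ℝ))
        = V 1 0 0 - V 1 0 1 - V 1 1 0 + V 1 1 1 := by
      simp [dotProduct, Matrix.mulVec, Fin.sum_univ_two]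
      ring
    rw [hqf, hV 1 0 0, hV 1 0 1, hV 1 1 0, hV 1 1 1]
    simp only [Fin.sum_univ_two, hexp, ← hcdef, Matrix.mulVec_single_one, Matrix.col_apply, dotProduct_single,
      mul_one, Matrix.mul_apply, Matrix.transpose_apply, Matrix.of_apply,
      Matrix.cons_val', Matrix.cons_val_zero, Matrix.cons_val_one, Matrix.head_cons,
      Matrix.empty_val', Matrix.cons_val_fin_one, Matrix.head_fin_const]
    refine comb8 _ _ _ _ _ _ _ _ _ ?_ ?_ ?_ ?_ ?_ ?_ ?_ ?_ ?_ <;>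
      first
      | (apply Continuous.intervalIntegrable; fun_prop)
      | (intro s _; simp only [hQ]; ring)
  have hL : (![1, -1] : Fin 2 → ℝ) ⬝ᵥ (Ct *ᵥ (![1, -1] : Fin 2 → ℝ))
      = 1/2 * ((![1, -1] : Fin 2 → ℝ) ⬝ᵥ (V 0 *ᵥ (![1, -1] : Fin 2 → ℝ)))
        + 1/2 * ((![1, -1] : Fin 2 → ℝ) ⬝ᵥ (V 1 *ᵥ (![1, -1] : Fin 2 → ℝ))) := by
    rw [hCt]; simp [dotProduct, Matrix.mulVec, Fin.sum_univ_two]; ring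
  have hR : (![1, -1] : Fin 2 → ℝ) ⬝ᵥ (Cb *ᵥ (![1, -1] : Fin 2 → ℝ))
      = 1/2 * Q 0 + 1/2 * Q 1 := by
    rw [hCb]; simp [dotProduct, Matrix.mulVec, Fin.sum_univ_two, hQ]; ring
  rw [hL, hR, key0, key1]
  have step : 1/2 * (∫ s in (0:ℝ)..1,
          ((1 + Real.exp (c*(1-s)))/2 * ((Real.exp (c*s))^2 * Q 0)
            + (1 - Real.exp (c*(1-s)))/2 * ((Real.exp (c*s))^2 * Q 1)))
      + 1/2 * (∫ s in (0:ℝ)..1,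
          ((1 + Real.exp (c*(1-s)))/2 * ((Real.exp (c*s))^2 * Q 1)
            + (1 - Real.exp (c*(1-s)))/2 * ((Real.exp (c*s))^2 * Q 0)))
      = ∫ s in (0:ℝ)..1, Real.exp (2*c*s) * (1/2 * Q 0 + 1/2 * Q 1) := by
    refine comb2 _ _ _ ?_ ?_ ?_
    · apply Continuous.intervalIntegrable; fun_prop
    · apply Continuous.intervalIntegrable; fun_prop
    · intro s _
      have he : Real.exp (2*c*s) = Real.exp (c*s) * Real.exp (c*s) := by
        rw [← Real.exp_add]; ring_nf
      simp only [he]; ring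
  rw [step, intervalIntegral.integral_mul_const]
  have h2c : (2*c) ≠ 0 := mul_ne_zero two_ne_zero hc
  have hI : (∫ s in (0:ℝ)..1, Real.exp (2*c*s)) = (Real.exp (2*c) - 1)/(2*c) := by
    rw [intervalIntegral.integral_comp_mul_left (fun x => Real.exp x) h2c]
    simp only [smul_eq_mul, mul_zero, mul_one, integral_exp, Real.exp_zero]
    ring
  have hδ2 : δ ^ 2 = Real.exp (2*c) := by rw [hδ, sq, ← Real.exp_add, two_mul]
  have hlog : Real.log δ⁻¹ = -c := by rw [hδ, Real.log_inv, Real.log_exp]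
  rw [hI, hδ2, hlog]
  have hcoef : (Real.exp (2*c) - 1)/(2*c) = (1 - Real.exp (2*c)) / (2 * -c) := by
    rw [div_eq_div_iff (by simpa using hc) (by simpa using hc)]
    ring
  rw [hcoef]
end

section
/- Assume γ + κ = 0 with κ > 0. Let C₁, C₂ be arbitrary real 2×2 matrices, set ũ := (1/2, 1/2)ᵀ, define V_i := Σ_{ℓ=1}^2 ∫₀¹ ⟨exp((1−s)·B̃)·e_i, e_ℓ⟩ · exp(s·B̃)·C_ℓ·exp(s·B̃)ᵀ ds for i ∈ {1,2}, and put C̃ := ũ₁·V₁ + ũ₂·V₂ and C̄ := ũ₁·C₁ + ũ₂·C₂. Then uᵀ·C̃·u = uᵀ·C̄·u. -/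
open Matrix

section Aux
open NormedSpace

private lemma exp_mulVec_one (A : Matrix (Fin 2) (Fin 2) ℝ)
    (h : A *ᵥ ![1,1] = 0) : exp A *ᵥ ![1,1] = ![1,1] := by
  letI : SeminormedRing (Matrix (Fin 2) (Fin 2) ℝ) := Matrix.linftyOpSemiNormedRing
  letI : NormedRing (Matrix (Fin 2) (Fin 2) ℝ) := Matrix.linftyOpNormedRing
  letI : NormedAlgebra ℝ (Matrix (Fin 2) (Fin 2) ℝ) := Matrix.linftyOpNormedAlgebra
  let L : Matrix (Fin 2) (Fin 2) ℝ →ₗ[ℝ] (Fin 2 → ℝ) :=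
    { toFun := fun M => M *ᵥ ![1,1]
      map_add' := fun M N => Matrix.add_mulVec M N _
      map_smul' := fun c M => Matrix.smul_mulVec c M _ }
  let Lc : Matrix (Fin 2) (Fin 2) ℝ →L[ℝ] (Fin 2 → ℝ) :=
    ⟨L, L.continuous_of_finiteDimensional⟩
  have hsum : Summable fun n : ℕ => ((n.factorial : ℝ))⁻¹ • A ^ n := expSeries_summable' A
  have h1 : exp A *ᵥ ![1,1] = Lc (∑' n : ℕ, ((n.factorial : ℝ))⁻¹ • A ^ n) := by
    rw [exp_eq_tsum (𝕂 := ℝ)]; rfl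
  rw [h1, Lc.map_tsum hsum]
  have h2 : ∀ n : ℕ, Lc (((n.factorial : ℝ))⁻¹ • A ^ n) = if n = 0 then ![1,1] else 0 := by
    intro n
    have : Lc (((n.factorial : ℝ))⁻¹ • A ^ n) = ((n.factorial : ℝ))⁻¹ • (A ^ n *ᵥ ![1,1]) :=
      Lc.map_smul _ _
    rw [this]
    cases n with
    | zero => simp [Matrix.one_mulVec]
    | succ n =>
      rw [pow_succ, ← Matrix.mulVec_mulVec, h, Matrix.mulVec_zero, smul_zero]
      simp
  calc (∑' n : ℕ, Lc (((n.factorial : ℝ))⁻¹ • A ^ n))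
      = ∑' n : ℕ, (if n = 0 then (![1,1] : Fin 2 → ℝ) else 0) := tsum_congr h2
    _ = ![1,1] := by
        rw [tsum_eq_single 0 (by intro b hb; simp [hb])]; simp

private lemma exp_cont : Continuous (fun A : Matrix (Fin 2) (Fin 2) ℝ => exp A) := by
  letI : SeminormedRing (Matrix (Fin 2) (Fin 2) ℝ) := Matrix.linftyOpSemiNormedRing
  letI : NormedRing (Matrix (Fin 2) (Fin 2) ℝ) := Matrix.linftyOpNormedRing
  letI : NormedAlgebra ℝ (Matrix (Fin 2) (Fin 2) ℝ) := Matrix.linftyOpNormedAlgebra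
  exact continuous_iff_continuousAt.2 fun x => (exp_analytic (𝕂 := ℝ) x).continuousAt

end Aux

/-- In the doubly symmetric critical case `γ + κ = 0`, `κ > 0`, with arbitrary real
2×2 matrices `C₁, C₂`, `ũ = (1/2, 1/2)ᵀ`,
`V_i = Σ_{ℓ=1}^2 ∫₀¹ ⟨exp((1−s)·B̃)e_i, e_ℓ⟩·exp(s·B̃)·C_ℓ·exp(s·B̃)ᵀ ds`
(entrywise integrals), `C̃ = ũ₁·V₁ + ũ₂·V₂` and `C̄ = ũ₁·C₁ + ũ₂·C₂`, one has
`uᵀ·C̃·u = uᵀ·C̄·u`, where `u = (1,1)ᵀ`. -/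
theorem uCtu_eq (γ κ : ℝ) (hcrit : γ + κ = 0) (hκ : 0 < κ)
    (C : Fin 2 → Matrix (Fin 2) (Fin 2) ℝ)
    (V : Fin 2 → Matrix (Fin 2) (Fin 2) ℝ)
    (hV : ∀ i a b, V i a b = ∑ ℓ : Fin 2, ∫ s in (0:ℝ)..1,
      ((NormedSpace.exp ((1 - s) • (!![γ, κ; κ, γ] : Matrix (Fin 2) (Fin 2) ℝ))
          *ᵥ (Pi.single i 1 : Fin 2 → ℝ)) ⬝ᵥ (Pi.single ℓ 1 : Fin 2 → ℝ))
        * ((NormedSpace.exp (s • (!![γ, κ; κ, γ] : Matrix (Fin 2) (Fin 2) ℝ))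
            * C ℓ
            * (NormedSpace.exp (s • (!![γ, κ; κ, γ] : Matrix (Fin 2) (Fin 2) ℝ)))ᵀ) a b))
    (Ct Cb : Matrix (Fin 2) (Fin 2) ℝ)
    (hCt : Ct = (1 / 2 : ℝ) • V 0 + (1 / 2 : ℝ) • V 1)
    (hCb : Cb = (1 / 2 : ℝ) • C 0 + (1 / 2 : ℝ) • C 1) :
    (![1, 1] : Fin 2 → ℝ) ⬝ᵥ (Ct *ᵥ (![1, 1] : Fin 2 → ℝ))
      = (![1, 1] : Fin 2 → ℝ) ⬝ᵥ (Cb *ᵥ (![1, 1] : Fin 2 → ℝ)) := by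
  set B : Matrix (Fin 2) (Fin 2) ℝ := !![γ, κ; κ, γ] with hBdef
  set E : ℝ → Matrix (Fin 2) (Fin 2) ℝ := fun t => NormedSpace.exp (t • B) with hEdef
  -- basic facts about B and E
  have hBu : B *ᵥ ![1,1] = 0 := by
    funext i
    fin_cases i <;>
      simp [hBdef, Matrix.mulVec, dotProduct, Fin.sum_univ_two] <;> linarith
  have hBT : Bᵀ = B := by
    funext i j; fin_cases i <;> fin_cases j <;> simp [hBdef]
  have hEu : ∀ t : ℝ, E t *ᵥ ![1,1] = ![1,1] := by
    intro t
    exact exp_mulVec_one _ (by rw [Matrix.smul_mulVec, hBu, smul_zero])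
  have hT : ∀ t : ℝ, (E t)ᵀ = E t := by
    intro t
    rw [hEdef]
    rw [← Matrix.exp_transpose, Matrix.transpose_smul, hBT]
  have hrow : ∀ (t : ℝ) (ℓ : Fin 2), E t ℓ 0 + E t ℓ 1 = 1 := by
    intro t ℓ
    have h := congrFun (hEu t) ℓ
    fin_cases ℓ <;>
      simpa [Matrix.mulVec, dotProduct, Fin.sum_univ_two] using h
  have hvm : ∀ t : ℝ, (![1,1] : Fin 2 → ℝ) ᵥ* E t = ![1,1] := by
    intro t
    rw [← hT, Matrix.vecMul_transpose, hEu]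
  -- dot product expansion
  have hdot : ∀ M : Matrix (Fin 2) (Fin 2) ℝ,
      (![1,1] : Fin 2 → ℝ) ⬝ᵥ (M *ᵥ ![1,1]) = M 0 0 + M 0 1 + M 1 0 + M 1 1 := by
    intro M
    simp [dotProduct, Matrix.mulVec, Fin.sum_univ_two]
    ring
  -- quadratic form invariance
  have hquadv : ∀ (s : ℝ) (M : Matrix (Fin 2) (Fin 2) ℝ),
      (![1,1] : Fin 2 → ℝ) ⬝ᵥ ((E s * M * (E s)ᵀ) *ᵥ ![1,1])
        = (![1,1] : Fin 2 → ℝ) ⬝ᵥ (M *ᵥ ![1,1]) := by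
    intro s M
    rw [hT, ← Matrix.mulVec_mulVec, hEu, ← Matrix.mulVec_mulVec,
      dotProduct_mulVec, hvm]
  have hquad : ∀ (s : ℝ) (M : Matrix (Fin 2) (Fin 2) ℝ),
      (E s * M * (E s)ᵀ) 0 0 + (E s * M * (E s)ᵀ) 0 1
        + (E s * M * (E s)ᵀ) 1 0 + (E s * M * (E s)ᵀ) 1 1
        = M 0 0 + M 0 1 + M 1 0 + M 1 1 := by
    intro s M
    have h := hquadv s M
    rwa [hdot, hdot] at h
  -- clean form of hV
  have hV' : ∀ i a b, V i a b
      = (∫ s in (0:ℝ)..1, E (1-s) 0 i * (E s * C 0 * (E s)ᵀ) a b)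
      + (∫ s in (0:ℝ)..1, E (1-s) 1 i * (E s * C 1 * (E s)ᵀ) a b) := by
    intro i a b
    rw [hV i a b, Fin.sum_univ_two]
    congr 1 <;>
    · apply intervalIntegral.integral_congr
      intro s _
      simp [Matrix.mulVec_single, dotProduct_single, hEdef]
  -- continuity and integrability
  have hEcont : Continuous E := exp_cont.comp (continuous_id.smul continuous_const)
  have hint : ∀ (i ℓ a b : Fin 2), IntervalIntegrable
      (fun s => E (1-s) ℓ i * (E s * C ℓ * (E s)ᵀ) a b) MeasureTheory.volume 0 1 := by
    intro i ℓ a b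
    apply Continuous.intervalIntegrable
    have h1 : Continuous fun s : ℝ => E (1-s) ℓ i :=
      (hEcont.comp (continuous_const.sub continuous_id)).matrix_elem ℓ i
    have h2 : Continuous fun s : ℝ => (E s * C ℓ * (E s)ᵀ) a b :=
      (((hEcont.matrix_mul continuous_const)).matrix_mul hEcont.matrix_transpose).matrix_elem a b
    exact h1.mul h2
  -- the key per-ℓ computation
  have key : ∀ ℓ : Fin 2,
      (∫ s in (0:ℝ)..1, E (1-s) ℓ 0 * (E s * C ℓ * (E s)ᵀ) 0 0)
      + (∫ s in (0:ℝ)..1, E (1-s) ℓ 0 * (E s * C ℓ * (E s)ᵀ) 0 1)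
      + (∫ s in (0:ℝ)..1, E (1-s) ℓ 0 * (E s * C ℓ * (E s)ᵀ) 1 0)
      + (∫ s in (0:ℝ)..1, E (1-s) ℓ 0 * (E s * C ℓ * (E s)ᵀ) 1 1)
      + (∫ s in (0:ℝ)..1, E (1-s) ℓ 1 * (E s * C ℓ * (E s)ᵀ) 0 0)
      + (∫ s in (0:ℝ)..1, E (1-s) ℓ 1 * (E s * C ℓ * (E s)ᵀ) 0 1)
      + (∫ s in (0:ℝ)..1, E (1-s) ℓ 1 * (E s * C ℓ * (E s)ᵀ) 1 0)
      + (∫ s in (0:ℝ)..1, E (1-s) ℓ 1 * (E s * C ℓ * (E s)ᵀ) 1 1)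
      = C ℓ 0 0 + C ℓ 0 1 + C ℓ 1 0 + C ℓ 1 1 := by
    intro ℓ
    have i1 := hint 0 ℓ 0 0
    have i2 := hint 0 ℓ 0 1
    have i3 := hint 0 ℓ 1 0
    have i4 := hint 0 ℓ 1 1
    have i5 := hint 1 ℓ 0 0
    have i6 := hint 1 ℓ 0 1
    have i7 := hint 1 ℓ 1 0
    have i8 := hint 1 ℓ 1 1
    rw [← intervalIntegral.integral_add i1 i2,
        ← intervalIntegral.integral_add (i1.add i2) i3,
        ← intervalIntegral.integral_add ((i1.add i2).add i3) i4,
        ← intervalIntegral.integral_add (((i1.add i2).add i3).add i4) i5,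
        ← intervalIntegral.integral_add ((((i1.add i2).add i3).add i4).add i5) i6,
        ← intervalIntegral.integral_add (((((i1.add i2).add i3).add i4).add i5).add i6) i7,
        ← intervalIntegral.integral_add
          ((((((i1.add i2).add i3).add i4).add i5).add i6).add i7) i8]
    have hptw : Set.EqOn
        (fun s => E (1-s) ℓ 0 * (E s * C ℓ * (E s)ᵀ) 0 0
          + E (1-s) ℓ 0 * (E s * C ℓ * (E s)ᵀ) 0 1
          + E (1-s) ℓ 0 * (E s * C ℓ * (E s)ᵀ) 1 0
          + E (1-s) ℓ 0 * (E s * C ℓ * (E s)ᵀ) 1 1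
          + E (1-s) ℓ 1 * (E s * C ℓ * (E s)ᵀ) 0 0
          + E (1-s) ℓ 1 * (E s * C ℓ * (E s)ᵀ) 0 1
          + E (1-s) ℓ 1 * (E s * C ℓ * (E s)ᵀ) 1 0
          + E (1-s) ℓ 1 * (E s * C ℓ * (E s)ᵀ) 1 1)
        (fun _ => C ℓ 0 0 + C ℓ 0 1 + C ℓ 1 0 + C ℓ 1 1)
        (Set.uIcc (0:ℝ) 1) := by
      intro s _
      have e1 : E (1-s) ℓ 0 + E (1-s) ℓ 1 = 1 := hrow (1-s) ℓ
      have e2 := hquad s (C ℓ)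
      simp only
      linear_combination
        ((E s * C ℓ * (E s)ᵀ) 0 0 + (E s * C ℓ * (E s)ᵀ) 0 1
          + (E s * C ℓ * (E s)ᵀ) 1 0 + (E s * C ℓ * (E s)ᵀ) 1 1) * e1 + e2
    rw [intervalIntegral.integral_congr hptw, intervalIntegral.integral_const]
    simp
  -- assemble
  rw [hCt, hCb]
  have hexp : ∀ (A₁ A₂ : Matrix (Fin 2) (Fin 2) ℝ),
      (![1,1] : Fin 2 → ℝ) ⬝ᵥ (((1/2:ℝ) • A₁ + (1/2:ℝ) • A₂) *ᵥ ![1,1])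
        = (1/2) * ((![1,1] : Fin 2 → ℝ) ⬝ᵥ (A₁ *ᵥ ![1,1]))
          + (1/2) * ((![1,1] : Fin 2 → ℝ) ⬝ᵥ (A₂ *ᵥ ![1,1])) := by
    intro A₁ A₂
    rw [Matrix.add_mulVec, Matrix.smul_mulVec, Matrix.smul_mulVec,
      dotProduct_add, dotProduct_smul, dotProduct_smul]
    simp [smul_eq_mul]
  rw [hexp, hexp, hdot, hdot, hdot, hdot]
  have k0 := key 0
  have k1 := key 1
  have hv00 := hV' 0 0 0
  have hv01 := hV' 0 0 1
  have hv02 := hV' 0 1 0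
  have hv03 := hV' 0 1 1
  have hv10 := hV' 1 0 0
  have hv11 := hV' 1 0 1
  have hv12 := hV' 1 1 0
  have hv13 := hV' 1 1 1
  rw [hv00, hv01, hv02, hv03, hv10, hv11, hv12, hv13]
  linarith [k0, k1]
end

section
/- Assume γ + κ = 0 with κ > 0 and let δ := e^{γ−κ} ∈ (0,1). Let ν be a measure on ℝ² with ∫ ‖z‖² ν(dz) < ∞, and define W := ∫₀¹ exp(t·B̃) · (∫_{ℝ²} z·zᵀ ν(dz)) · exp(t·B̃)ᵀ dt. Then uᵀ·W·u = ∫ (z₁+z₂)² ν(dz) and vᵀ·W·v = ((1−δ²)/(2·log(δ⁻¹))) · ∫ (z₁−z₂)² ν(dz). -/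
open Matrix MeasureTheory

lemma exp_B_aux (κ t : ℝ) :
    NormedSpace.exp (t • (!![-κ, κ; κ, -κ] : Matrix (Fin 2) (Fin 2) ℝ)) =
    !![(1 + Real.exp (t * (-2*κ)))/2, (1 - Real.exp (t * (-2*κ)))/2;
       (1 - Real.exp (t * (-2*κ)))/2, (1 + Real.exp (t * (-2*κ)))/2] := by
  set P : Matrix (Fin 2) (Fin 2) ℝ := !![1,1;1,-1] with hPdef
  have hleft : ((2:ℝ)⁻¹ • P) * P = 1 := by
    ext i j
    fin_cases i <;> fin_cases j <;>
      simp [hPdef, Matrix.mul_apply, Fin.sum_univ_two] <;> norm_num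
  have hP : P⁻¹ = (2:ℝ)⁻¹ • P := Matrix.inv_eq_left_inv hleft
  have hunit : IsUnit P := (Matrix.isUnit_iff_isUnit_det P).mpr (Matrix.isUnit_det_of_left_inverse hleft)
  have hdecomp : t • (!![-κ, κ; κ, -κ] : Matrix (Fin 2) (Fin 2) ℝ)
      = P * Matrix.diagonal ![0, t * (-2*κ)] * P⁻¹ := by
    rw [hP]
    ext i j
    fin_cases i <;> fin_cases j <;>
      simp [hPdef, Matrix.mul_apply, Fin.sum_univ_two, Matrix.vecMul_diagonal,
        Matrix.diagonal_apply] <;> ring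
  rw [hdecomp, Matrix.exp_conj _ _ hunit, Matrix.exp_diagonal, hP]
  have hexp : NormedSpace.exp (![0, t * (-2*κ)] : Fin 2 → ℝ)
      = ![1, Real.exp (t * (-2*κ))] := by
    ext i
    fin_cases i
    · simp [NormedSpace.exp_zero]
    · simp only [Pi.coe_exp]
      simp [← Real.exp_eq_exp_ℝ]
  rw [hexp]
  ext i j
  fin_cases i <;> fin_cases j <;>
    simp [hPdef, Matrix.mul_apply, Fin.sum_univ_two, Matrix.vecMul_diagonal,
      Matrix.diagonal_apply] <;> ring

/-- In the doubly symmetric critical case `γ + κ = 0`, `κ > 0`, with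
`δ = e^{γ−κ} ∈ (0,1)` and a measure `ν` on `ℝ²` with finite second moment, the matrix
`W = ∫₀¹ exp(t·B̃)·(∫ z·zᵀ dν)·exp(t·B̃)ᵀ dt` (entrywise integrals) satisfies
`uᵀ·W·u = ∫ (z₁+z₂)² dν` and `vᵀ·W·v = ((1−δ²)/(2·log(δ⁻¹)))·∫ (z₁−z₂)² dν`,
where `u = (1,1)ᵀ` and `v = (1,−1)ᵀ`. -/
theorem quadratic_form_W (γ κ : ℝ) (hcrit : γ + κ = 0) (hκ : 0 < κ)
    (δ : ℝ) (hδ : δ = Real.exp (γ - κ))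
    (ν : Measure (Fin 2 → ℝ)) (hν : Integrable (fun z : Fin 2 → ℝ => ‖z‖ ^ 2) ν)
    (Z : Matrix (Fin 2) (Fin 2) ℝ)
    (hZ : ∀ a b, Z a b = ∫ z : Fin 2 → ℝ, z a * z b ∂ν)
    (W : Matrix (Fin 2) (Fin 2) ℝ)
    (hW : ∀ a b, W a b = ∫ t in (0:ℝ)..1,
      (NormedSpace.exp (t • (!![γ, κ; κ, γ] : Matrix (Fin 2) (Fin 2) ℝ))
        * Z
        * (NormedSpace.exp (t • (!![γ, κ; κ, γ] : Matrix (Fin 2) (Fin 2) ℝ)))ᵀ) a b) :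
    (![1, 1] : Fin 2 → ℝ) ⬝ᵥ (W *ᵥ (![1, 1] : Fin 2 → ℝ))
        = ∫ z : Fin 2 → ℝ, (z 0 + z 1) ^ 2 ∂ν
      ∧ (![1, -1] : Fin 2 → ℝ) ⬝ᵥ (W *ᵥ (![1, -1] : Fin 2 → ℝ))
        = (1 - δ ^ 2) / (2 * Real.log δ⁻¹) * ∫ z : Fin 2 → ℝ, (z 0 - z 1) ^ 2 ∂ν := by
  obtain rfl : γ = -κ := by linarith
  simp only [exp_B_aux] at hW
  set M : ℝ → Matrix (Fin 2) (Fin 2) ℝ := fun t =>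
    !![(1 + Real.exp (t * (-2*κ)))/2, (1 - Real.exp (t * (-2*κ)))/2;
       (1 - Real.exp (t * (-2*κ)))/2, (1 + Real.exp (t * (-2*κ)))/2] with hM
  have hWf : ∀ a b, W a b = ∫ t in (0:ℝ)..1, (M t * Z * (M t)ᵀ) a b := hW
  have hMc : ∀ i j : Fin 2, Continuous fun t => M t i j := by
    intro i j
    fin_cases i <;> fin_cases j <;> simp [hM] <;> fun_prop
  have hfc : ∀ a b : Fin 2, Continuous fun t => (M t * Z * (M t)ᵀ) a b := by
    intro a b
    simp only [Matrix.mul_apply, Matrix.transpose_apply, Fin.sum_univ_two]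
    exact (((((hMc a 0).mul continuous_const).add
        ((hMc a 1).mul continuous_const)).mul (hMc b 0)).add
      ((((hMc a 0).mul continuous_const).add
        ((hMc a 1).mul continuous_const)).mul (hMc b 1)))
  have hfi : ∀ a b : Fin 2, IntervalIntegrable (fun t => (M t * Z * (M t)ᵀ) a b)
      MeasureTheory.volume 0 1 := fun a b => (hfc a b).intervalIntegrable _ _
  have hZint : ∀ a b : Fin 2, Integrable (fun z : Fin 2 → ℝ => z a * z b) ν := by
    intro a b
    refine hν.mono' (((measurable_pi_apply a).mul (measurable_pi_apply b)).aestronglyMeasurable) ?_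
    filter_upwards with z
    have ha : |z a| ≤ ‖z‖ := norm_le_pi_norm z a
    have hb : |z b| ≤ ‖z‖ := norm_le_pi_norm z b
    have h1 : (0:ℝ) ≤ ‖z‖ := norm_nonneg _
    calc ‖z a * z b‖ = |z a| * |z b| := by rw [Real.norm_eq_abs, abs_mul]
      _ ≤ ‖z‖ * ‖z‖ := mul_le_mul ha hb (abs_nonneg _) h1
      _ = ‖z‖ ^ 2 := (sq ‖z‖).symm
  have hsum1 : (∫ z : Fin 2 → ℝ, (z 0 + z 1) ^ 2 ∂ν)
      = Z 0 0 + Z 0 1 + (Z 1 0 + Z 1 1) := by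
    have iA : Integrable (fun z : Fin 2 → ℝ => z 0 * z 0 + z 0 * z 1) ν :=
      (hZint 0 0).add (hZint 0 1)
    have iB : Integrable (fun z : Fin 2 → ℝ => z 1 * z 0 + z 1 * z 1) ν :=
      (hZint 1 0).add (hZint 1 1)
    have e : (∫ z : Fin 2 → ℝ, (z 0 + z 1) ^ 2 ∂ν)
        = ∫ z : Fin 2 → ℝ, (z 0 * z 0 + z 0 * z 1) + (z 1 * z 0 + z 1 * z 1) ∂ν :=
      integral_congr_ae (Filter.Eventually.of_forall fun z => by ring)
    rw [e, integral_add iA iB, integral_add (hZint 0 0) (hZint 0 1),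
      integral_add (hZint 1 0) (hZint 1 1), hZ 0 0, hZ 0 1, hZ 1 0, hZ 1 1]
  have hsum2 : (∫ z : Fin 2 → ℝ, (z 0 - z 1) ^ 2 ∂ν)
      = Z 0 0 - Z 0 1 - Z 1 0 + Z 1 1 := by
    have iA : Integrable (fun z : Fin 2 → ℝ => z 0 * z 0 + z 1 * z 1) ν :=
      (hZint 0 0).add (hZint 1 1)
    have iB : Integrable (fun z : Fin 2 → ℝ => z 0 * z 1 + z 1 * z 0) ν :=
      (hZint 0 1).add (hZint 1 0)
    have e : (∫ z : Fin 2 → ℝ, (z 0 - z 1) ^ 2 ∂ν)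
        = ∫ z : Fin 2 → ℝ, (z 0 * z 0 + z 1 * z 1) - (z 0 * z 1 + z 1 * z 0) ∂ν :=
      integral_congr_ae (Filter.Eventually.of_forall fun z => by ring)
    rw [e, integral_sub iA iB, integral_add (hZint 0 0) (hZint 1 1),
      integral_add (hZint 0 1) (hZint 1 0), hZ 0 0, hZ 0 1, hZ 1 0, hZ 1 1]
    ring
  constructor
  · have hu : (![1, 1] : Fin 2 → ℝ) ⬝ᵥ (W *ᵥ (![1, 1] : Fin 2 → ℝ))
        = W 0 0 + W 0 1 + (W 1 0 + W 1 1) := by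
      simp [dotProduct, Matrix.mulVec, Fin.sum_univ_two]
    rw [hu, hWf 0 0, hWf 0 1, hWf 1 0, hWf 1 1,
      ← intervalIntegral.integral_add (hfi 0 0) (hfi 0 1),
      ← intervalIntegral.integral_add (hfi 1 0) (hfi 1 1),
      ← intervalIntegral.integral_add ((hfi 0 0).add (hfi 0 1)) ((hfi 1 0).add (hfi 1 1))]
    have hpt : ∀ t : ℝ, ((M t * Z * (M t)ᵀ) 0 0 + (M t * Z * (M t)ᵀ) 0 1)
        + ((M t * Z * (M t)ᵀ) 1 0 + (M t * Z * (M t)ᵀ) 1 1)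
        = Z 0 0 + Z 0 1 + (Z 1 0 + Z 1 1) := by
      intro t
      simp only [hM, Matrix.mul_apply, Matrix.transpose_apply, Fin.sum_univ_two]
      norm_num
      ring
    rw [intervalIntegral.integral_congr (g := fun _ => Z 0 0 + Z 0 1 + (Z 1 0 + Z 1 1))
      (fun t _ => hpt t), intervalIntegral.integral_const, hsum1]
    simp
  · have hv : (![1, -1] : Fin 2 → ℝ) ⬝ᵥ (W *ᵥ (![1, -1] : Fin 2 → ℝ))
        = (W 0 0 + W 1 1) - (W 0 1 + W 1 0) := by
      simp [dotProduct, Matrix.mulVec, Fin.sum_univ_two]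
      ring
    rw [hv, hWf 0 0, hWf 0 1, hWf 1 0, hWf 1 1,
      ← intervalIntegral.integral_add (hfi 0 0) (hfi 1 1),
      ← intervalIntegral.integral_add (hfi 0 1) (hfi 1 0),
      ← intervalIntegral.integral_sub ((hfi 0 0).add (hfi 1 1)) ((hfi 0 1).add (hfi 1 0))]
    have hpt : ∀ t : ℝ, ((M t * Z * (M t)ᵀ) 0 0 + (M t * Z * (M t)ᵀ) 1 1)
        - ((M t * Z * (M t)ᵀ) 0 1 + (M t * Z * (M t)ᵀ) 1 0)
        = Real.exp (t * (-4*κ)) * (Z 0 0 - Z 0 1 - Z 1 0 + Z 1 1) := by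
      intro t
      have hgg : Real.exp (t * (-2*κ)) * Real.exp (t * (-2*κ)) = Real.exp (t * (-4*κ)) := by
        rw [← Real.exp_add]; ring_nf
      rw [← hgg]
      simp only [hM, Matrix.mul_apply, Matrix.transpose_apply, Fin.sum_univ_two]
      norm_num
      ring
    rw [intervalIntegral.integral_congr
      (g := fun t => Real.exp (t * (-4*κ)) * (Z 0 0 - Z 0 1 - Z 1 0 + Z 1 1))
      (fun t _ => hpt t)]
    rw [intervalIntegral.integral_mul_const]
    have hI : (∫ t in (0:ℝ)..1, Real.exp (t * (-4*κ)))
        = (Real.exp (-4*κ) - 1) / (-4*κ) := by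
      have hd : ∀ t ∈ Set.uIcc (0:ℝ) 1,
          HasDerivAt (fun s : ℝ => Real.exp (s * (-4*κ)) / (-4*κ))
            (Real.exp (t * (-4*κ))) t := by
        intro t _
        have h1 : HasDerivAt (fun s : ℝ => s * (-4*κ)) (-4*κ) t :=
          hasDerivAt_mul_const _
        have h2 : HasDerivAt (fun s : ℝ => Real.exp (s * (-4*κ)))
            (Real.exp (t * (-4*κ)) * (-4*κ)) t := h1.exp
        have h3 := h2.div_const (-4*κ)
        have hne : (-4*κ) ≠ 0 := by nlinarith
        rw [mul_div_cancel_right₀ _ hne] at h3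
        exact h3
      rw [intervalIntegral.integral_eq_sub_of_hasDerivAt hd
        ((Real.continuous_exp.comp (continuous_id.mul continuous_const)).intervalIntegrable 0 1)]
      norm_num
      ring
    rw [hI, hδ, hsum2]
    have hlog : Real.log (Real.exp (-κ - κ))⁻¹ = 2*κ := by
      rw [Real.log_inv, Real.log_exp]; ring
    rw [hlog]
    have hexpsq : Real.exp (-κ - κ) ^ 2 = Real.exp (-4*κ) := by
      rw [sq, ← Real.exp_add]; ring_nf
    rw [hexpsq]
    have hκ' : κ ≠ 0 := ne_of_gt hκ
    field_simp
    ring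
end
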